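/- arXiv:2010.06295 — 8 statements merged into one kernel-verified Lean document; each statement's English description precedes it below -/
import Mathlib

section
/- The sum of reciprocals of all positive integers whose decimal representation contains no digit 9 converges (Kempner's theorem). -/
open Finset

/-- Count of no-nine numbers with digit-length `d` in `range N` is at most `9^d`. -/
lemma kempner_count_le (d N : ℕ) :
    ((Finset.range N).filter
      (fun n => (0 < n ∧ 9 ∉ Nat.digits 10 n) ∧ (Nat.digits 10 n).length = d)).card
      ≤ 9 ^ d := by
  classical
  have h := Finset.card_le_card_of_injOn
    (f := fun n => fun i : Fin d => (⟨min ((Nat.digits 10 n).getD i 0) 8, by omega⟩ : Fin 9))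
    (s := (Finset.range N).filter
      (fun n => (0 < n ∧ 9 ∉ Nat.digits 10 n) ∧ (Nat.digits 10 n).length = d))
    (t := Finset.univ) (fun _ _ => Finset.mem_univ _) ?_
  · refine h.trans (le_of_eq ?_)
    simp
  · intro m hm n hn hmn
    simp only [Finset.coe_filter, Set.mem_setOf_eq, Finset.mem_range] at hm hn
    obtain ⟨-, ⟨-, hm9⟩, hmd⟩ := hm
    obtain ⟨-, ⟨-, hn9⟩, hnd⟩ := hn
    have key : Nat.digits 10 m = Nat.digits 10 n := by
      apply List.ext_get (by rw [hmd, hnd])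
      intro i h1 h2
      have hi : i < d := by omega
      have hfm := congrFun hmn ⟨i, hi⟩
      have e1 : (Nat.digits 10 m).getD i 0 = (Nat.digits 10 m).get ⟨i, h1⟩ := by
        simp [List.getD_eq_getElem?_getD, List.getElem?_eq_getElem h1]
      have e2 : (Nat.digits 10 n).getD i 0 = (Nat.digits 10 n).get ⟨i, h2⟩ := by
        simp [List.getD_eq_getElem?_getD, List.getElem?_eq_getElem h2]
      have m1 : (Nat.digits 10 m).get ⟨i, h1⟩ < 9 := by
        have h10 := Nat.digits_lt_base (by norm_num) (List.get_mem (Nat.digits 10 m) ⟨i, h1⟩)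
        have hne : (Nat.digits 10 m).get ⟨i, h1⟩ ≠ 9 := fun h => hm9 (h ▸ List.get_mem _ _)
        omega
      have m2 : (Nat.digits 10 n).get ⟨i, h2⟩ < 9 := by
        have h10 := Nat.digits_lt_base (by norm_num) (List.get_mem (Nat.digits 10 n) ⟨i, h2⟩)
        have hne : (Nat.digits 10 n).get ⟨i, h2⟩ ≠ 9 := fun h => hn9 (h ▸ List.get_mem _ _)
        omega
      have hv := congrArg Fin.val hfm
      simp only [e1, e2] at hv
      omega
    exact Nat.digits_inj_iff.mp key

/-- Kempner's theorem: the sum of reciprocals of positive integers whose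
decimal representation contains no digit 9 converges. -/
theorem kempner_no_nine :
    Summable (fun a : {n : ℕ // 0 < n ∧ 9 ∉ Nat.digits 10 n} => (1 : ℝ) / (a : ℕ)) := by
  classical
  set s : Set ℕ := {n : ℕ | 0 < n ∧ 9 ∉ Nat.digits 10 n} with hs
  have key : Summable (s.indicator (fun n : ℕ => (1 : ℝ) / n)) := by
    apply summable_of_sum_range_le (c := 10 * (1 - (9 : ℝ) / 10)⁻¹)
    · intro n
      apply Set.indicator_nonneg
      intro x _
      positivity
    · intro N
      rw [Finset.sum_indicator_eq_sum_filter]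
      have hmaps : ∀ i ∈ (Finset.range N).filter (· ∈ s),
          (Nat.digits 10 i).length ∈ Finset.range (N + 1) := by
        intro i hi
        simp only [Finset.mem_filter, Finset.mem_range, hs, Set.mem_setOf_eq] at hi
        obtain ⟨hiN, hipos, -⟩ := hi
        have : (Nat.digits 10 i).length = Nat.log 10 i + 1 :=
          Nat.digits_len 10 i (by norm_num) (by omega)
        have := Nat.log_le_self 10 i
        simp only [Finset.mem_range]
        omega
      rw [← Finset.sum_fiberwise_of_maps_to hmaps]
      have hbound : ∀ d ∈ Finset.range (N + 1),
          (∑ i ∈ ((Finset.range N).filter (· ∈ s)).filter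
            (fun i => (Nat.digits 10 i).length = d), (1 : ℝ) / i)
          ≤ 10 * ((9 : ℝ) / 10) ^ d := by
        intro d _
        have hsub : ((Finset.range N).filter (· ∈ s)).filter
            (fun i => (Nat.digits 10 i).length = d) =
            (Finset.range N).filter
              (fun n => (0 < n ∧ 9 ∉ Nat.digits 10 n) ∧ (Nat.digits 10 n).length = d) := by
          rw [Finset.filter_filter]
          rfl
        have hterm : ∀ i ∈ ((Finset.range N).filter (· ∈ s)).filter
            (fun i => (Nat.digits 10 i).length = d), (1 : ℝ) / i ≤ 10 / 10 ^ d := by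
          intro i hi
          simp only [Finset.mem_filter, hs, Set.mem_setOf_eq] at hi
          obtain ⟨⟨-, hipos, -⟩, hlen⟩ := hi
          have h1 : (10 : ℕ) ^ (Nat.digits 10 i).length ≤ 10 * i :=
            Nat.base_pow_length_digits_le 10 i (by norm_num) (by omega)
          rw [hlen] at h1
          have h1' : (10 : ℝ) ^ d ≤ 10 * i := by exact_mod_cast h1
          rw [div_le_div_iff₀ (by exact_mod_cast hipos) (by positivity)]
          linarith
        calc (∑ i ∈ ((Finset.range N).filter (· ∈ s)).filter
              (fun i => (Nat.digits 10 i).length = d), (1 : ℝ) / i)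
            ≤ ∑ _i ∈ ((Finset.range N).filter (· ∈ s)).filter
              (fun i => (Nat.digits 10 i).length = d), (10 : ℝ) / 10 ^ d :=
              Finset.sum_le_sum hterm
          _ = (((Finset.range N).filter (· ∈ s)).filter
              (fun i => (Nat.digits 10 i).length = d)).card * ((10 : ℝ) / 10 ^ d) := by
              rw [Finset.sum_const, nsmul_eq_mul]
          _ ≤ (9 ^ d : ℕ) * ((10 : ℝ) / 10 ^ d) := by
              apply mul_le_mul_of_nonneg_right
              · exact_mod_cast (hsub ▸ kempner_count_le d N)
              · positivity
          _ = 10 * ((9 : ℝ) / 10) ^ d := by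
              push_cast
              rw [div_pow]
              ring
      calc (∑ d ∈ Finset.range (N + 1), ∑ i ∈ ((Finset.range N).filter (· ∈ s)).filter
            (fun i => (Nat.digits 10 i).length = d), (1 : ℝ) / i)
          ≤ ∑ d ∈ Finset.range (N + 1), 10 * ((9 : ℝ) / 10) ^ d :=
            Finset.sum_le_sum hbound
        _ = 10 * ∑ d ∈ Finset.range (N + 1), ((9 : ℝ) / 10) ^ d := by
            rw [Finset.mul_sum]
        _ ≤ 10 * (1 - (9 : ℝ) / 10)⁻¹ := by
            apply mul_le_mul_of_nonneg_left _ (by norm_num)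
            calc ∑ d ∈ Finset.range (N + 1), ((9:ℝ)/10) ^ d
                ≤ ∑' d : ℕ, ((9:ℝ)/10) ^ d := Summable.sum_le_tsum _ (fun i _ => by positivity)
                  (summable_geometric_of_lt_one (by norm_num) (by norm_num))
              _ = (1 - (9:ℝ)/10)⁻¹ := tsum_geometric_of_lt_one (by norm_num) (by norm_num)
  exact (summable_subtype_iff_indicator (s := s) (f := fun n : ℕ => (1 : ℝ) / n)).mpr key
end

section
/- For any base g ≥ 2 and any digit u ∈ {0,...,g-1}, the sum of reciprocals of positive integers whose base-g representation omits the digit u converges. -/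
open Finset

lemma kempner_digits_len {g : ℕ} (hg : 2 ≤ g) {m n : ℕ} (hn : n ∈ Finset.Ico (g ^ m) (g ^ (m + 1))) :
    (Nat.digits g n).length = m + 1 := by
  have hg1 : 1 < g := hg
  rw [Finset.mem_Ico] at hn
  have hn0 : n ≠ 0 := by
    have : 0 < g ^ m := pow_pos (by omega) m
    omega
  have h1 : n < g ^ (Nat.digits g n).length := Nat.lt_base_pow_length_digits hg1
  have h2 : g ^ (Nat.digits g n).length ≤ g * n := Nat.base_pow_length_digits_le g n hg1 hn0
  -- g^m ≤ n < g^L and g^L ≤ g*n < g^(m+2)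
  have hL1 : m < (Nat.digits g n).length := by
    have : g ^ m < g ^ (Nat.digits g n).length := lt_of_le_of_lt hn.1 h1
    exact (pow_lt_pow_iff_right₀ hg1).mp this
  have hL2 : (Nat.digits g n).length < m + 2 := by
    have : g ^ (Nat.digits g n).length < g ^ (m + 2) := by
      calc g ^ (Nat.digits g n).length ≤ g * n := h2
        _ < g * g ^ (m + 1) := by
            exact (Nat.mul_lt_mul_left (by omega : 0 < g)).mpr hn.2
        _ = g ^ (m + 2) := by ring
    exact (pow_lt_pow_iff_right₀ hg1).mp this
  omega

lemma kempner_card_bound {g u : ℕ} (hg : 2 ≤ g) (hu : u < g) (m : ℕ) :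
    ((Finset.Ico (g ^ m) (g ^ (m + 1))).filter (fun n => u ∉ Nat.digits g n)).card
      ≤ (g - 1) ^ (m + 1) := by
  have hg1 : 1 < g := hg
  have key : ((Finset.Ico (g ^ m) (g ^ (m + 1))).filter (fun n => u ∉ Nat.digits g n)).card
      ≤ (Fintype.piFinset (fun _ : Fin (m + 1) => (Finset.range g).erase u)).card := by
    apply Finset.card_le_card_of_injOn (fun n => fun i : Fin (m + 1) => (Nat.digits g n).getD i 0)
    · intro n hn
      rw [Finset.mem_coe, Finset.mem_filter] at hn
      have hlen := kempner_digits_len hg hn.1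
      rw [Finset.mem_coe, Fintype.mem_piFinset]
      intro i
      have hi : (i : ℕ) < (Nat.digits g n).length := by rw [hlen]; exact i.2
      beta_reduce
      rw [List.getD_eq_getElem _ _ hi]
      have hmem : (Nat.digits g n)[(i:ℕ)] ∈ Nat.digits g n := List.getElem_mem hi
      rw [Finset.mem_erase, Finset.mem_range]
      exact ⟨fun h => hn.2 (h ▸ hmem), Nat.digits_lt_base hg1 hmem⟩
    · intro a ha b hb hab
      simp only [Finset.coe_filter, Set.mem_setOf_eq] at ha hb
      have hla := kempner_digits_len hg ha.1
      have hlb := kempner_digits_len hg hb.1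
      have : Nat.digits g a = Nat.digits g b := by
        apply List.ext_getElem (by rw [hla, hlb])
        intro i h1 h2
        have hi : i < m + 1 := by rwa [hla] at h1
        have := congrFun hab ⟨i, hi⟩
        simp only [Fin.val_mk] at this
        rwa [List.getD_eq_getElem _ _ h1, List.getD_eq_getElem _ _ h2] at this
      calc a = Nat.ofDigits g (Nat.digits g a) := (Nat.ofDigits_digits g a).symm
        _ = Nat.ofDigits g (Nat.digits g b) := by rw [this]
        _ = b := Nat.ofDigits_digits g b
  calc _ ≤ _ := key
    _ = (g - 1) ^ (m + 1) := by
        rw [Fintype.card_piFinset]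
        simp [Finset.card_erase_of_mem (Finset.mem_range.mpr hu), Finset.card_range]

/-- For any base g ≥ 2 and digit u < g, the sum of reciprocals of positive integers
whose base-g representation omits the digit u converges. -/
theorem kempner_base_g (g u : ℕ) (hg : 2 ≤ g) (hu : u < g) :
    Summable (fun a : {n : ℕ // 0 < n ∧ u ∉ Nat.digits g n} => (1 : ℝ) / (a : ℕ)) := by
  have hg1 : 1 < g := hg
  have hgR : (1 : ℝ) < g := by exact_mod_cast hg1
  have hgpos : (0 : ℝ) < g := by linarith
  set S : Set ℕ := {n : ℕ | 0 < n ∧ u ∉ Nat.digits g n} with hS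
  have : Summable (S.indicator (fun n : ℕ => (1 : ℝ) / n)) := by
    set r : ℝ := (g - 1) / g with hr
    have hr0 : 0 ≤ r := by
      apply div_nonneg _ hgpos.le
      linarith
    have hr1 : r < 1 := by
      rw [hr, div_lt_one hgpos]; linarith
    apply summable_of_sum_range_le (c := (g - 1) * (1 - r)⁻¹)
    · intro n
      apply Set.indicator_apply_nonneg
      intro h
      positivity
    intro N
    -- sum of indicator over range N = sum over filtered set
    have step1 : ∑ n ∈ Finset.range N, S.indicator (fun n : ℕ => (1 : ℝ) / n) n
        = ∑ n ∈ (Finset.range N).filter (fun n => n ∈ S), (1 : ℝ) / n := by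
      rw [Finset.sum_indicator_eq_sum_filter]
    rw [step1]
    set B : ℕ → Finset ℕ := fun m =>
      (Finset.Ico (g ^ m) (g ^ (m + 1))).filter (fun n => u ∉ Nat.digits g n) with hB
    have hsubset : (Finset.range N).filter (fun n => n ∈ S) ⊆ (Finset.range N).biUnion B := by
      intro n hn
      rw [Finset.mem_filter, Finset.mem_range] at hn
      have hnN : n < N := hn.1
      have hn' : 0 < n ∧ u ∉ Nat.digits g n := hn.2
      have hn0 : 0 < n := hn'.1
      have hnu : u ∉ Nat.digits g n := hn'.2
      set L := (Nat.digits g n).length with hL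
      have hLpos : 0 < L := by
        rw [hL]
        exact List.length_pos_iff.mpr (Nat.digits_ne_nil_iff_ne_zero.mpr (Nat.pos_iff_ne_zero.mp hn0))
      have h1 : n < g ^ L := Nat.lt_base_pow_length_digits hg1
      have h2 : g ^ L ≤ g * n := Nat.base_pow_length_digits_le g n hg1 (by omega)
      have hlow : g ^ (L - 1) ≤ n := by
        have : g * g ^ (L - 1) ≤ g * n := by
          calc g * g ^ (L - 1) = g ^ L := by
                rw [← pow_succ']
                congr 1
                omega
            _ ≤ g * n := h2
        exact Nat.le_of_mul_le_mul_left this (by omega)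
      have hmN : L - 1 < N := by
        have h3 : L - 1 < g ^ (L - 1) := Nat.lt_pow_self hg1
        omega
      rw [Finset.mem_biUnion]
      refine ⟨L - 1, Finset.mem_range.mpr hmN, ?_⟩
      rw [hB]
      simp only [Finset.mem_filter, Finset.mem_Ico]
      have : L - 1 + 1 = L := by omega
      exact ⟨⟨hlow, by rw [this]; exact h1⟩, hnu⟩
    have hdisj : (↑(Finset.range N) : Set ℕ).PairwiseDisjoint B := by
      intro i _ j _ hij
      apply Finset.disjoint_left.mpr
      intro n hni hnj
      rw [hB] at hni hnj
      simp only [Finset.mem_filter] at hni hnj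
      have h1 := kempner_digits_len hg hni.1
      have h2 := kempner_digits_len hg hnj.1
      omega
    calc ∑ n ∈ (Finset.range N).filter (fun n => n ∈ S), (1 : ℝ) / n
        ≤ ∑ n ∈ (Finset.range N).biUnion B, (1 : ℝ) / n := by
          apply Finset.sum_le_sum_of_subset_of_nonneg hsubset
          intro i _ _
          positivity
      _ = ∑ m ∈ Finset.range N, ∑ n ∈ B m, (1 : ℝ) / n := Finset.sum_biUnion hdisj
      _ ≤ ∑ m ∈ Finset.range N, (g - 1 : ℝ) * r ^ m := by
          apply Finset.sum_le_sum
          intro m _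
          have hcard := kempner_card_bound hg hu m
          have hbound : ∀ n ∈ B m, (1 : ℝ) / n ≤ (1 / g ^ m : ℝ) := by
            intro n hn
            rw [hB, Finset.mem_filter, Finset.mem_Ico] at hn
            have hn1 : (0:ℝ) < (g:ℝ) ^ m := by positivity
            have hle : (g:ℝ) ^ m ≤ (n:ℝ) := by exact_mod_cast hn.1.1
            apply one_div_le_one_div_of_le hn1 hle
          calc ∑ n ∈ B m, (1 : ℝ) / n ≤ ∑ _n ∈ B m, (1 / g ^ m : ℝ) :=
                Finset.sum_le_sum hbound
            _ = (B m).card * (1 / g ^ m : ℝ) := by rw [Finset.sum_const, nsmul_eq_mul]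
            _ ≤ ((g - 1 : ℕ) ^ (m + 1) : ℝ) * (1 / g ^ m : ℝ) := by
                apply mul_le_mul_of_nonneg_right _ (by positivity)
                exact_mod_cast hcard
            _ = (g - 1 : ℝ) * r ^ m := by
                have hcast : ((g - 1 : ℕ) : ℝ) = (g : ℝ) - 1 := by
                  push_cast [Nat.cast_sub (by omega : 1 ≤ g)]
                  ring
                rw [hr]
                push_cast [hcast]
                rw [div_pow]
                field_simp
                ring
      _ = (g - 1 : ℝ) * ∑ m ∈ Finset.range N, r ^ m := by rw [Finset.mul_sum]
      _ ≤ (g - 1 : ℝ) * (1 - r)⁻¹ := by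
          apply mul_le_mul_of_nonneg_left _ (by linarith)
          have hsummable : Summable (fun m : ℕ => r ^ m) := summable_geometric_of_lt_one hr0 hr1
          calc ∑ m ∈ Finset.range N, r ^ m ≤ ∑' m : ℕ, r ^ m :=
                Summable.sum_le_tsum (Finset.range N) (fun i _ => by positivity) hsummable
            _ = (1 - r)⁻¹ := tsum_geometric_of_lt_one hr0 hr1
  -- transfer to subtype
  rw [show (fun a : {n : ℕ // 0 < n ∧ u ∉ Nat.digits g n} => (1 : ℝ) / (a : ℕ))
      = (fun n : ℕ => (1 : ℝ) / n) ∘ (fun a : {n : ℕ // 0 < n ∧ u ∉ Nat.digits g n} => (a : ℕ))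
      from rfl]
  exact summable_subtype_iff_indicator.mpr this
end

section
/- For g ≥ 2 and a fixed forbidden digit u ∈ [0,g-1], the series ∑_{a ∈ A_{g,u}} a^{-σ} converges for every real σ > log(g-1)/log g. -/
open Finset

lemma card_block (g u : ℕ) (hg : 2 ≤ g) (hu : u < g) (m : ℕ) :
    ((Finset.Ico (g^m) (g^(m+1))).filter (fun n => u ∉ Nat.digits g n)).card
      ≤ (g-1)^(m+1) := by
  have h1 : (1:ℕ) < g := hg
  induction m with
  | zero =>
    calc ((Finset.Ico (g^0) (g^1)).filter (fun n => u ∉ Nat.digits g n)).card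
        ≤ (Finset.Ico (g^0) (g^1)).card := Finset.card_filter_le _ _
      _ = (g-1)^1 := by simp
  | succ m ih =>
    classical
    set T := ((Finset.range g).filter (· ≠ u)) ×ˢ
        ((Finset.Ico (g^m) (g^(m+1))).filter (fun n => u ∉ Nat.digits g n)) with hT
    have hmap : ∀ n ∈ (Finset.Ico (g^(m+1)) (g^(m+2))).filter
        (fun n => u ∉ Nat.digits g n), (n % g, n / g) ∈ T := by
      intro n hn
      simp only [Finset.mem_filter, Finset.mem_Ico] at hn
      obtain ⟨⟨hlo, hhi⟩, hd⟩ := hn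
      have hnpos : 0 < n := lt_of_lt_of_le (Nat.pow_pos (by omega : 0 < g)) hlo
      rw [Nat.digits_def' h1 hnpos] at hd
      simp only [List.mem_cons, not_or] at hd
      simp only [hT, Finset.mem_product, Finset.mem_filter, Finset.mem_range, Finset.mem_Ico]
      refine ⟨⟨Nat.mod_lt _ (by omega), fun h => hd.1 h.symm⟩, ⟨?_, ?_⟩, hd.2⟩
      · rw [Nat.le_div_iff_mul_le (by omega)]
        calc g^m * g = g^(m+1) := by ring
          _ ≤ n := hlo
      · rw [Nat.div_lt_iff_lt_mul (by omega)]
        calc n < g^(m+2) := hhi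
          _ = g^(m+1) * g := by ring
    have hinj : Set.InjOn (fun n => (n % g, n / g))
        ((Finset.Ico (g^(m+1)) (g^(m+2))).filter (fun n => u ∉ Nat.digits g n)) := by
      intro a _ b _ hab
      simp only [Prod.mk.injEq] at hab
      calc a = g * (a / g) + a % g := (Nat.div_add_mod a g).symm
        _ = g * (b / g) + b % g := by rw [hab.1, hab.2]
        _ = b := Nat.div_add_mod b g
    calc ((Finset.Ico (g^(m+1)) (g^(m+2))).filter (fun n => u ∉ Nat.digits g n)).card
        ≤ T.card := Finset.card_le_card_of_injOn _ hmap hinj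
      _ = ((Finset.range g).filter (· ≠ u)).card *
          ((Finset.Ico (g^m) (g^(m+1))).filter (fun n => u ∉ Nat.digits g n)).card :=
        Finset.card_product _ _
      _ ≤ (g-1) * (g-1)^(m+1) := by
          apply Nat.mul_le_mul _ ih
          calc ((Finset.range g).filter (· ≠ u)).card
              ≤ ((Finset.range g).erase u).card := by rw [Finset.filter_ne']
            _ ≤ g - 1 := by
                rw [Finset.card_erase_of_mem (Finset.mem_range.mpr hu)]
                simp
      _ = (g-1)^(m+2) := by ring

lemma sum_range_pow_le (g u : ℕ) (hg : 2 ≤ g) (hu : u < g) (σ : ℝ) (hσ0 : 0 ≤ σ) (m : ℕ) :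
    ∑ n ∈ Finset.range (g^m),
      Set.indicator {n : ℕ | 0 < n ∧ u ∉ Nat.digits g n} (fun n => ((n:ℕ):ℝ) ^ (-σ)) n
    ≤ ((g:ℝ)-1) * ∑ k ∈ Finset.range m, (((g:ℝ)-1) * (g:ℝ)^(-σ))^k := by
  classical
  set f := Set.indicator {n : ℕ | 0 < n ∧ u ∉ Nat.digits g n} (fun n => ((n:ℕ):ℝ) ^ (-σ)) with hf
  have hg1 : (1:ℝ) ≤ (g:ℝ) := by exact_mod_cast Nat.one_le_of_lt hg
  have hgpos : (0:ℝ) < (g:ℝ) := by positivity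
  induction m with
  | zero =>
    simp only [pow_zero, Finset.range_one, Finset.sum_singleton, Finset.range_zero,
      Finset.sum_empty, mul_zero]
    have : f 0 = 0 := by
      apply Set.indicator_of_notMem
      simp
    simp [this]
  | succ m ih =>
    have hle : g ^ m ≤ g ^ (m+1) := Nat.pow_le_pow_right (by omega) (by omega)
    have hblock : ∑ n ∈ Finset.Ico (g^m) (g^(m+1)), f n
        ≤ ((g:ℝ)-1)^(m+1) * ((g:ℝ)^m)^(-σ) := by
      rw [hf, Finset.sum_indicator_eq_sum_filter]
      have hterm : ∀ n ∈ (Finset.Ico (g^m) (g^(m+1))).filter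
          (fun n => n ∈ {n : ℕ | 0 < n ∧ u ∉ Nat.digits g n}),
          ((n:ℕ):ℝ) ^ (-σ) ≤ ((g:ℝ)^m)^(-σ) := by
        intro n hn
        simp only [Finset.mem_filter, Finset.mem_Ico] at hn
        apply Real.rpow_le_rpow_of_nonpos (by positivity) _ (by linarith)
        calc ((g:ℝ)^m) = ((g^m : ℕ) : ℝ) := by push_cast; ring
          _ ≤ (n:ℝ) := by exact_mod_cast hn.1.1
      calc ∑ n ∈ (Finset.Ico (g^m) (g^(m+1))).filter
            (fun n => n ∈ {n : ℕ | 0 < n ∧ u ∉ Nat.digits g n}), ((n:ℕ):ℝ) ^ (-σ)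
          ≤ ∑ _n ∈ (Finset.Ico (g^m) (g^(m+1))).filter
            (fun n => n ∈ {n : ℕ | 0 < n ∧ u ∉ Nat.digits g n}), ((g:ℝ)^m)^(-σ) :=
            Finset.sum_le_sum hterm
        _ = (((Finset.Ico (g^m) (g^(m+1))).filter
            (fun n => n ∈ {n : ℕ | 0 < n ∧ u ∉ Nat.digits g n})).card : ℝ)
            * ((g:ℝ)^m)^(-σ) := by rw [Finset.sum_const, nsmul_eq_mul]
        _ ≤ ((g:ℝ)-1)^(m+1) * ((g:ℝ)^m)^(-σ) := by
            apply mul_le_mul_of_nonneg_right _ (Real.rpow_nonneg (by positivity) _)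
            have hcard : ((Finset.Ico (g^m) (g^(m+1))).filter
                (fun n => n ∈ {n : ℕ | 0 < n ∧ u ∉ Nat.digits g n})).card
                ≤ (g-1)^(m+1) := by
              refine le_trans (Finset.card_le_card ?_) (card_block g u hg hu m)
              intro n hn
              simp only [Finset.mem_filter, Set.mem_setOf_eq] at hn ⊢
              exact ⟨hn.1, hn.2.2⟩
            calc (((Finset.Ico (g^m) (g^(m+1))).filter
                (fun n => n ∈ {n : ℕ | 0 < n ∧ u ∉ Nat.digits g n})).card : ℝ)
                ≤ (((g-1)^(m+1) : ℕ) : ℝ) := by exact_mod_cast hcard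
              _ = ((g:ℝ)-1)^(m+1) := by
                  push_cast [Nat.cast_sub (by omega : 1 ≤ g)]; ring

    have hgeom : ((g:ℝ)-1)^(m+1) * ((g:ℝ)^m)^(-σ)
        = ((g:ℝ)-1) * (((g:ℝ)-1) * (g:ℝ)^(-σ))^m := by
      have h1 : ((g:ℝ)^m)^(-σ) = ((g:ℝ)^(-σ))^m := by
        rw [← Real.rpow_natCast ((g:ℝ)) m, ← Real.rpow_natCast ((g:ℝ)^(-σ)) m,
          ← Real.rpow_mul hgpos.le, ← Real.rpow_mul hgpos.le]
        ring_nf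
      rw [h1, mul_pow]
      ring
    have hsplit : ∑ n ∈ Finset.range (g^(m+1)), f n
        = ∑ n ∈ Finset.range (g^m), f n + ∑ n ∈ Finset.Ico (g^m) (g^(m+1)), f n := by
      rw [Finset.range_eq_Ico, Finset.range_eq_Ico,
        Finset.sum_Ico_consecutive _ (Nat.zero_le (g^m)) hle]
    rw [hsplit, Finset.sum_range_succ, mul_add]
    exact add_le_add ih (hblock.trans_eq hgeom)

/-- For g ≥ 2 and forbidden digit u < g, the series ∑ a^{-σ} over integers with no
base-g digit u converges for every real σ > log(g-1)/log g. -/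
theorem missing_digit_converges (g u : ℕ) (hg : 2 ≤ g) (hu : u < g) (σ : ℝ)
    (hσ : Real.log (g - 1) / Real.log g < σ) :
    Summable (fun a : {n : ℕ // 0 < n ∧ u ∉ Nat.digits g n} => ((a : ℕ) : ℝ) ^ (-σ)) := by
  have hg1 : (1:ℕ) < g := hg
  have hgR : (1:ℝ) < (g:ℝ) := by exact_mod_cast hg1
  have hlogg : 0 < Real.log g := Real.log_pos hgR
  have hg1R : (1:ℝ) ≤ (g:ℝ) - 1 := by
    have : (2:ℝ) ≤ g := by exact_mod_cast hg
    linarith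
  have hσ0 : 0 ≤ σ := by
    have h0 : 0 ≤ Real.log ((g:ℝ)-1) := Real.log_nonneg hg1R
    exact le_of_lt (lt_of_le_of_lt (div_nonneg h0 hlogg.le) hσ)
  set r := ((g:ℝ)-1) * (g:ℝ)^(-σ) with hrdef
  have hr0 : 0 ≤ r := mul_nonneg (by linarith) (Real.rpow_nonneg (by positivity) _)
  have hrlt : r < 1 := by
    have h1 : Real.log ((g:ℝ)-1) < σ * Real.log g := by
      rw [div_lt_iff₀ hlogg] at hσ; exact hσ
    have h2 : ((g:ℝ)-1) < (g:ℝ)^σ := by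
      calc ((g:ℝ)-1) = Real.exp (Real.log ((g:ℝ)-1)) := (Real.exp_log (by linarith)).symm
        _ < Real.exp (σ * Real.log g) := Real.exp_lt_exp.mpr h1
        _ = (g:ℝ)^σ := by rw [Real.rpow_def_of_pos (by linarith), mul_comm]
    have hpos : 0 < (g:ℝ)^σ := Real.rpow_pos_of_pos (by linarith) _
    rw [hrdef, Real.rpow_neg (by positivity)]
    calc ((g:ℝ)-1) * ((g:ℝ)^σ)⁻¹ = ((g:ℝ)-1) / (g:ℝ)^σ := by ring
      _ < 1 := (div_lt_one hpos).mpr h2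
  have hnn : ∀ n, 0 ≤ Set.indicator {n : ℕ | 0 < n ∧ u ∉ Nat.digits g n}
      (fun n => ((n:ℕ):ℝ)^(-σ)) n :=
    fun n => Set.indicator_nonneg (fun k _ => Real.rpow_nonneg (Nat.cast_nonneg k) _) n
  have hsum : Summable (Set.indicator {n : ℕ | 0 < n ∧ u ∉ Nat.digits g n}
      (fun n => ((n:ℕ):ℝ)^(-σ))) := by
    apply summable_of_sum_range_le (c := ((g:ℝ)-1) * (1-r)⁻¹) hnn
    intro N
    have hN : N ≤ g ^ N := (Nat.lt_pow_self hg1 : N < g ^ N).le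
    calc ∑ i ∈ Finset.range N, Set.indicator {n : ℕ | 0 < n ∧ u ∉ Nat.digits g n}
          (fun n => ((n:ℕ):ℝ)^(-σ)) i
        ≤ ∑ i ∈ Finset.range (g^N), Set.indicator {n : ℕ | 0 < n ∧ u ∉ Nat.digits g n}
          (fun n => ((n:ℕ):ℝ)^(-σ)) i :=
          Finset.sum_le_sum_of_subset_of_nonneg (Finset.range_subset_range.mpr hN)
            (fun i _ _ => hnn i)
      _ ≤ ((g:ℝ)-1) * ∑ k ∈ Finset.range N, r^k := sum_range_pow_le g u hg hu σ hσ0 N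
      _ ≤ ((g:ℝ)-1) * (1-r)⁻¹ := by
          apply mul_le_mul_of_nonneg_left _ (by linarith)
          calc ∑ k ∈ Finset.range N, r^k
              ≤ ∑' k, r^k := Summable.sum_le_tsum _ (fun k _ => pow_nonneg hr0 k)
                (summable_geometric_of_lt_one hr0 hrlt)
            _ = (1-r)⁻¹ := tsum_geometric_of_lt_one hr0 hrlt
  exact summable_subtype_iff_indicator.mpr hsum
end

section
/- The Kempner series ∑_{a ∈ A_{10,9}} a^{-σ} diverges at σ = log 9 / log 10. -/
open Real

/-- Auxiliary map: encode a tuple of digits `< 9` as a number with leading digit 1. -/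
private def gmap (k : ℕ) (d : Fin k → Fin 9) : ℕ :=
  Nat.ofDigits 10 ((List.ofFn fun i => ((d i : ℕ))) ++ [1])

private lemma gmap_digits (k : ℕ) (d : Fin k → Fin 9) :
    Nat.digits 10 (gmap k d) = (List.ofFn fun i => ((d i : ℕ))) ++ [1] := by
  apply Nat.digits_ofDigits 10 (by norm_num)
  · intro l hl
    rcases List.mem_append.mp hl with h | h
    · obtain ⟨i, rfl⟩ := List.mem_ofFn.mp h
      exact lt_of_lt_of_le (d i).isLt (by norm_num)
    · simp only [List.mem_singleton] at h; omega
  · intro h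
    rw [List.getLast_append]
    norm_num

private lemma gmap_pos (k : ℕ) (d : Fin k → Fin 9) : 0 < gmap k d := by
  rcases Nat.eq_zero_or_pos (gmap k d) with h | h
  · exfalso
    have := gmap_digits k d
    rw [h] at this
    simp at this
  · exact h

private lemma gmap_nine (k : ℕ) (d : Fin k → Fin 9) : 9 ∉ Nat.digits 10 (gmap k d) := by
  rw [gmap_digits]
  intro h
  rcases List.mem_append.mp h with h | h
  · obtain ⟨i, hi⟩ := List.mem_ofFn.mp h
    have := (d i).isLt
    omega
  · simp at h

private lemma gmap_len (k : ℕ) (d : Fin k → Fin 9) :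
    (Nat.digits 10 (gmap k d)).length = k + 1 := by
  rw [gmap_digits]; simp

private lemma gmap_lt (k : ℕ) (d : Fin k → Fin 9) : gmap k d < 10 ^ (k + 1) := by
  have := Nat.lt_base_pow_length_digits (b := 10) (m := gmap k d) (by norm_num)
  rwa [gmap_len] at this

private lemma gmap_inj (k : ℕ) : Function.Injective (gmap k) := by
  intro d d' h
  have h2 : Nat.digits 10 (gmap k d) = Nat.digits 10 (gmap k d') := by rw [h]
  rw [gmap_digits, gmap_digits] at h2
  have h3 := List.append_inj_left' h2 rfl
  funext i
  exact Fin.ext (congrFun (List.ofFn_inj.mp h3) i)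

private lemma pow_ten_rpow (m : ℕ) :
    ((10 : ℝ) ^ m) ^ (Real.log 9 / Real.log 10) = (9 : ℝ) ^ m := by
  have h10 : (0 : ℝ) < 10 := by norm_num
  have hlog : Real.log 10 ≠ 0 := ne_of_gt (Real.log_pos (by norm_num))
  rw [← Real.rpow_natCast (10 : ℝ) m, ← Real.rpow_mul h10.le,
    Real.rpow_def_of_pos h10, ← Real.rpow_natCast (9 : ℝ) m,
    Real.rpow_def_of_pos (by norm_num : (0:ℝ) < 9)]
  congr 1
  field_simp

/-- The Kempner series ∑ a^{-σ} over positive integers with no decimal digit 9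
diverges at σ = log 9 / log 10. -/
theorem kempner_diverges_critical :
    ¬ Summable (fun a : {n : ℕ // 0 < n ∧ 9 ∉ Nat.digits 10 n} =>
      ((a : ℕ) : ℝ) ^ (-(Real.log 9 / Real.log 10))) := by
  intro hs
  set σ : ℝ := Real.log 9 / Real.log 10 with hσ
  have hσ0 : 0 ≤ σ := div_nonneg (Real.log_nonneg (by norm_num))
    (Real.log_nonneg (by norm_num))
  set T := {n : ℕ // 0 < n ∧ 9 ∉ Nat.digits 10 n}
  set f : T → ℝ := fun a => ((a : ℕ) : ℝ) ^ (-σ) with hf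
  have hnonneg : ∀ a : T, 0 ≤ f a := fun a =>
    Real.rpow_nonneg (Nat.cast_nonneg _) _
  -- the finsets
  have hemb : ∀ k, Function.Injective
      (fun d : Fin k → Fin 9 => (⟨gmap k d, gmap_pos k d, gmap_nine k d⟩ : T)) := by
    intro k d d' h
    exact gmap_inj k (congrArg Subtype.val h)
  set F : ℕ → Finset T := fun k =>
    Finset.image (fun d : Fin k → Fin 9 => (⟨gmap k d, gmap_pos k d, gmap_nine k d⟩ : T))
      Finset.univ with hF
  have hcard : ∀ k, (F k).card = 9 ^ k := by
    intro k
    rw [hF]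
    rw [Finset.card_image_of_injective _ (hemb k), Finset.card_univ]
    simp
  have hmemlen : ∀ k, ∀ a ∈ F k, (Nat.digits 10 (a : ℕ)).length = k + 1 := by
    intro k a ha
    obtain ⟨d, _, rfl⟩ := Finset.mem_image.mp ha
    exact gmap_len k d
  -- lower bound on each term
  have hterm : ∀ k, ∀ a ∈ F k, ((9 : ℝ) ^ (k + 1))⁻¹ ≤ f a := by
    intro k a ha
    obtain ⟨d, _, rfl⟩ := Finset.mem_image.mp ha
    have hlt : (gmap k d : ℝ) ≤ (10 : ℝ) ^ (k + 1) := by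
      have := gmap_lt k d
      exact_mod_cast this.le
    have hp : (0 : ℝ) < (gmap k d : ℕ) := by exact_mod_cast gmap_pos k d
    have h1 : ((10 : ℝ) ^ (k + 1)) ^ (-σ) ≤ ((gmap k d : ℕ) : ℝ) ^ (-σ) :=
      Real.rpow_le_rpow_of_nonpos hp hlt (neg_nonpos.mpr hσ0)
    calc ((9 : ℝ) ^ (k + 1))⁻¹ = ((10 : ℝ) ^ (k + 1)) ^ (-σ) := by
          rw [Real.rpow_neg (by positivity), pow_ten_rpow]
      _ ≤ f ⟨gmap k d, gmap_pos k d, gmap_nine k d⟩ := h1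
  -- sum over F k is at least 1/9
  have hsum : ∀ k, (1 : ℝ) / 9 ≤ ∑ a ∈ F k, f a := by
    intro k
    have h1 : (F k).card • ((9 : ℝ) ^ (k + 1))⁻¹ ≤ ∑ a ∈ F k, f a :=
      Finset.card_nsmul_le_sum (F k) f _ (hterm k)
    rw [hcard k] at h1
    have h2 : ((9 : ℕ) ^ k : ℝ) * ((9 : ℝ) ^ (k + 1))⁻¹ = 1 / 9 := by
      push_cast
      rw [pow_succ]
      field_simp
    rw [nsmul_eq_mul] at h1
    rw [← h2]
    convert h1 using 2
    push_cast
    ring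
  -- the F k are pairwise disjoint
  have hdisj : ∀ k k', k ≠ k' → Disjoint (F k) (F k') := by
    intro k k' hne
    rw [Finset.disjoint_left]
    intro a hk hk'
    have := hmemlen k a hk
    have := hmemlen k' a hk'
    omega
  -- unbounded partial sums
  have hbound : ∀ K : ℕ, (K : ℝ) * (1 / 9) ≤ ∑' a, f a := by
    intro K
    have hd : ∀ k ∈ Finset.range K, ∀ k' ∈ Finset.range K, k ≠ k' →
        Disjoint (F k) (F k') := fun k _ k' _ h => hdisj k k' h
    have h1 : ∑ a ∈ (Finset.range K).biUnion F, f a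
        = ∑ k ∈ Finset.range K, ∑ a ∈ F k, f a := Finset.sum_biUnion hd
    have h2 : (K : ℝ) * (1 / 9) ≤ ∑ k ∈ Finset.range K, ∑ a ∈ F k, f a := by
      calc (K : ℝ) * (1 / 9) = ∑ _k ∈ Finset.range K, (1 : ℝ) / 9 := by
            rw [Finset.sum_const, Finset.card_range, nsmul_eq_mul]
        _ ≤ _ := Finset.sum_le_sum fun k _ => hsum k
    calc (K : ℝ) * (1 / 9) ≤ ∑ a ∈ (Finset.range K).biUnion F, f a := by
          rw [h1]; exact h2
      _ ≤ ∑' a, f a := Summable.sum_le_tsum _ (fun a _ => hnonneg a) hs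
  obtain ⟨K, hK⟩ := exists_nat_gt (9 * ∑' a, f a)
  have := hbound K
  linarith
end

section
/- Let g ≥ 2 and (U_i)_{i∈ℕ} be proper subsets of [0,g-1] such that card{i < m : |U_i| = k} = α_k m + ε_k(m) with ε_k(m)/m → 0 for each k ∈ [0,g-1], for nonnegative reals α_0,...,α_{g-1}. Then the series ∑_{a ∈ A_{g,𝒰}} a^{-σ} converges for every real σ > (1/log g) ∑_{k=0}^{g-1} α_k log(g-k). -/
/-- Convergence half of the variable-digit-restriction theorem: with digit-size
densities α_k (error terms ε_k(m)/m → 0), the series ∑ a^{-σ} over A_{g,𝒰}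
converges for every σ > (1/log g) ∑_k α_k log(g-k). -/
theorem variable_missing_digits_converges (g : ℕ) (hg : 2 ≤ g)
    (U : ℕ → Finset ℕ) (hU : ∀ i, U i ⊂ Finset.range g)
    (α : ℕ → ℝ) (hα : ∀ k < g, 0 ≤ α k)
    (hε : ∀ k < g, Filter.Tendsto
      (fun m : ℕ =>
        (((Finset.range m).filter (fun i => (U i).card = k)).card - α k * m) / m)
      Filter.atTop (nhds 0))
    (σ : ℝ)
    (hσ : (∑ k ∈ Finset.range g, α k * Real.log (g - k)) / Real.log g < σ) :
    Summable (fun a : {n : ℕ // 0 < n ∧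
        ∀ i < (Nat.digits g n).length, (Nat.digits g n).getD i 0 ∉ U i} =>
      ((a : ℕ) : ℝ) ^ (-σ)) := by
  classical
  set c : ℝ := ∑ k ∈ Finset.range g, α k * Real.log (g - k) with hc
  have hg0 : (0:ℝ) < g := by positivity
  have hg1 : (1:ℝ) < g := by exact_mod_cast hg
  have hglog : 0 < Real.log g := Real.log_pos hg1
  have hcard : ∀ i, (U i).card < g := fun i => by
    simpa using Finset.card_lt_card (hU i)
  have hcardle : ∀ i, (U i).card ≤ g := fun i => (hcard i).le
  set P : ℕ → ℕ := fun m => ∏ i ∈ Finset.range m, (g - (U i).card) with hP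
  have hPpos : ∀ m, 0 < P m := fun m =>
    Finset.prod_pos fun i _ => Nat.sub_pos_of_lt (hcard i)
  have hlogk : ∀ k < g, 0 ≤ Real.log ((g:ℝ) - k) := by
    intro k hk
    apply Real.log_nonneg
    have : (k:ℝ) + 1 ≤ g := by exact_mod_cast hk
    linarith
  have hc0 : 0 ≤ c := Finset.sum_nonneg fun k hk =>
    mul_nonneg (hα k (Finset.mem_range.mp hk)) (hlogk k (Finset.mem_range.mp hk))
  have hσpos : 0 < σ := lt_of_le_of_lt (div_nonneg hc0 hglog.le) hσ
  have hcσ : c < σ * Real.log g := (div_lt_iff₀ hglog).mp hσ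
  set δ : ℝ := (σ * Real.log g - c) / 2 with hδ
  have hδpos : 0 < δ := by rw [hδ]; linarith
  -- positivity of factors
  have hfac_pos : ∀ i, (0:ℝ) < (g:ℝ) - (U i).card := fun i => by
    have h1 : ((U i).card:ℝ) < g := by exact_mod_cast hcard i
    linarith
  have hcastP : ∀ m, (P m : ℝ) = ∏ i ∈ Finset.range m, ((g:ℝ) - (U i).card) := by
    intro m
    rw [hP, Nat.cast_prod]
    exact Finset.prod_congr rfl fun i _ => by
      rw [Nat.cast_sub (hcardle i)]
  -- log of the product, fiberwise
  have hlogP : ∀ m, Real.log (P m) =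
      ∑ k ∈ Finset.range g,
        ((((Finset.range m).filter fun i => (U i).card = k).card : ℝ)
          * Real.log ((g:ℝ) - k)) := by
    intro m
    rw [hcastP, Real.log_prod (fun i _ => (hfac_pos i).ne')]
    rw [← Finset.sum_fiberwise_of_maps_to (g := fun i => (U i).card)
      (t := Finset.range g) (fun i _ => Finset.mem_range.mpr (hcard i))]
    refine Finset.sum_congr rfl fun k _ => ?_
    have hconst : ∀ i ∈ (Finset.range m).filter fun i => (U i).card = k,
        Real.log ((g:ℝ) - (U i).card) = Real.log ((g:ℝ) - k) := by
      intro i hi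
      rw [(Finset.mem_filter.mp hi).2]
    rw [Finset.sum_congr rfl hconst, Finset.sum_const, nsmul_eq_mul]
  -- the limit statement
  have hT : Filter.Tendsto (fun m : ℕ => (Real.log (P m) - c * m) / m)
      Filter.atTop (nhds 0) := by
    have h0 : Filter.Tendsto (fun m : ℕ => ∑ k ∈ Finset.range g,
        (((((Finset.range m).filter fun i => (U i).card = k).card : ℝ) - α k * m) / m
          * Real.log ((g:ℝ) - k))) Filter.atTop (nhds 0) := by
      have h1 := tendsto_finset_sum (Finset.range g) (fun k hk =>
        (hε k (Finset.mem_range.mp hk)).mul_const (Real.log ((g:ℝ) - k)))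
      simpa using h1
    refine h0.congr' ?_
    filter_upwards [Filter.eventually_gt_atTop 0] with m hm
    have hm' : ((m:ℕ):ℝ) ≠ 0 := by
      exact_mod_cast hm.ne'
    rw [hlogP m, eq_div_iff hm', Finset.sum_mul, hc, Finset.sum_mul,
      ← Finset.sum_sub_distrib]
    refine Finset.sum_congr rfl fun k _ => ?_
    field_simp
  -- the eventual bound on log (P m)
  have hev : ∀ᶠ m : ℕ in Filter.atTop, Real.log (P m) ≤ (c + δ) * m := by
    filter_upwards [hT.eventually_lt_const hδpos, Filter.eventually_gt_atTop 0]
      with m h1 h2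
    have hm : (0:ℝ) < (m:ℝ) := by exact_mod_cast h2
    rw [div_lt_iff₀ hm] at h1
    nlinarith
  -- the majorant
  set b : ℕ → ℝ := fun m => (P m : ℝ) * (g:ℝ) ^ ((1 - (m:ℝ)) * σ) with hbdef
  have hb_nonneg : ∀ m, 0 ≤ b m := fun m =>
    mul_nonneg (Nat.cast_nonneg _) (Real.rpow_nonneg hg0.le _)
  set ρ : ℝ := Real.exp (-δ) with hρ
  have hρ0 : 0 ≤ ρ := (Real.exp_pos _).le
  have hρ1 : ρ < 1 := by
    rw [hρ]
    exact Real.exp_lt_one_iff.mpr (by linarith)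
  have hbev : ∀ᶠ m : ℕ in Filter.atTop, b m ≤ (g:ℝ)^σ * ρ^m := by
    filter_upwards [hev] with m h1
    have hPm : (0:ℝ) < (P m : ℝ) := by exact_mod_cast hPpos m
    have hbpos : 0 < b m := mul_pos hPm (Real.rpow_pos_of_pos hg0 _)
    have hlogb : Real.log (b m) = Real.log (P m) + (1 - (m:ℝ)) * σ * Real.log g := by
      rw [hbdef]
      rw [Real.log_mul hPm.ne' (Real.rpow_pos_of_pos hg0 _).ne', Real.log_rpow hg0]
    have hid : (σ * Real.log g - δ) * m = (c + δ) * m := by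
      rw [hδ]; ring
    have h2 : Real.log (b m) ≤ σ * Real.log g + (-δ) * m := by
      rw [hlogb]
      nlinarith [h1, hid]
    calc b m = Real.exp (Real.log (b m)) := (Real.exp_log hbpos).symm
      _ ≤ Real.exp (σ * Real.log g + (-δ) * m) := Real.exp_le_exp.mpr h2
      _ = (g:ℝ)^σ * ρ^m := by
          rw [Real.exp_add, Real.rpow_def_of_pos hg0, mul_comm (Real.log g) σ, hρ,
            ← Real.exp_nat_mul]
          ring_nf
  obtain ⟨M, hM⟩ := Filter.eventually_atTop.mp hbev
  have hsb : Summable b := by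
    rw [← summable_nat_add_iff M]
    refine Summable.of_nonneg_of_le (fun n => hb_nonneg _)
      (fun n => hM (n + M) (Nat.le_add_left _ _)) ?_
    have h3 : Summable (fun n : ℕ => ((g:ℝ)^σ * ρ^M) * ρ^n) :=
      (summable_geometric_of_lt_one hρ0 hρ1).mul_left _
    refine h3.congr fun n => ?_
    rw [pow_add]; ring
  -- main comparison
  refine summable_of_sum_le (c := ∑' m, b m)
    (fun a => Real.rpow_nonneg (Nat.cast_nonneg _) _) ?_
  intro u
  set s : Finset ℕ := u.image Subtype.val with hs
  have hsA : ∀ n ∈ s, 0 < n ∧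
      ∀ i < (Nat.digits g n).length, (Nat.digits g n).getD i 0 ∉ U i := by
    intro n hn
    obtain ⟨a, _, rfl⟩ := Finset.mem_image.mp hn
    exact a.2
  have hsum : ∑ a ∈ u, ((a:ℕ):ℝ)^(-σ) = ∑ n ∈ s, (n:ℝ)^(-σ) := by
    rw [hs, Finset.sum_image (fun a _ b _ h => Subtype.val_injective h)]
  rw [hsum]
  have hfiber : ∀ m : ℕ,
      ∑ n ∈ s.filter (fun n => (Nat.digits g n).length = m), (n:ℝ)^(-σ) ≤ b m := by
    intro m
    rcases Nat.eq_zero_or_pos m with rfl | hm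
    · have hempty : s.filter (fun n => (Nat.digits g n).length = 0) = ∅ := by
        refine Finset.eq_empty_of_forall_notMem fun n hn => ?_
        obtain ⟨hns, hlen⟩ := Finset.mem_filter.mp hn
        have h0 := (hsA n hns).1
        have : n = 0 := Nat.digits_eq_nil_iff_eq_zero.mp (List.length_eq_zero_iff.mp hlen)
        omega
      rw [hempty, Finset.sum_empty]
      exact hb_nonneg 0
    · set t := s.filter (fun n => (Nat.digits g n).length = m) with ht
      have hcardt : t.card ≤ P m := by
        have hPcard : ((Finset.range m).pi fun i => Finset.range g \ U i).card = P m := by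
          rw [Finset.card_pi]
          exact Finset.prod_congr rfl fun i _ => by
            rw [Finset.card_sdiff_of_subset (hU i).subset, Finset.card_range]
        rw [← hPcard]
        apply Finset.card_le_card_of_injOn
          (fun n => fun i _ => (Nat.digits g n).getD i 0)
        · intro n hn
          obtain ⟨hns, hlen⟩ := Finset.mem_filter.mp hn
          rw [Finset.mem_coe, Finset.mem_pi]
          intro i hi
          have hi' : i < (Nat.digits g n).length := by
            rw [hlen]; exact Finset.mem_range.mp hi
          beta_reduce
          rw [List.getD_eq_getElem _ _ hi', Finset.mem_sdiff]
          constructor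
          · exact Finset.mem_range.mpr
              (Nat.digits_lt_base hg (List.getElem_mem _))
          · have h5 := (hsA n hns).2 i hi'
            rwa [List.getD_eq_getElem _ _ hi'] at h5
        · intro n₁ h₁ n₂ h₂ h
          obtain ⟨hns₁, hlen₁⟩ := Finset.mem_filter.mp (Finset.mem_coe.mp h₁)
          obtain ⟨hns₂, hlen₂⟩ := Finset.mem_filter.mp (Finset.mem_coe.mp h₂)
          apply Nat.digits.injective g
          apply List.ext_getElem (by rw [hlen₁, hlen₂])
          intro i hi1 hi2
          have hi : i ∈ Finset.range m := Finset.mem_range.mpr (by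
            rw [← hlen₁]; exact hi1)
          have h6 : (Nat.digits g n₁).getD i 0 = (Nat.digits g n₂).getD i 0 :=
            congrFun (congrFun h i) hi
          rwa [List.getD_eq_getElem _ _ hi1, List.getD_eq_getElem _ _ hi2] at h6
      have hterm : ∀ n ∈ t, (n:ℝ)^(-σ) ≤ (g:ℝ)^((1-(m:ℝ))*σ) := by
        intro n hn
        obtain ⟨hns, hlen⟩ := Finset.mem_filter.mp hn
        have hn0 : n ≠ 0 := (hsA n hns).1.ne'
        have hge : g ^ (m - 1) ≤ n := by
          have h1 := Nat.base_pow_length_digits_le g n (by omega) hn0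
          rw [hlen] at h1
          have hpow : g ^ m = g * g ^ (m-1) := by
            conv_lhs => rw [show m = (m-1)+1 by omega]
            rw [pow_succ']
          rw [hpow] at h1
          exact Nat.le_of_mul_le_mul_left h1 (by omega)
        have hgen : ((g:ℝ)^(m-1:ℕ)) ≤ (n:ℝ) := by exact_mod_cast hge
        have heq : (g:ℝ)^((1-(m:ℝ))*σ) = ((g:ℝ)^(m-1:ℕ)) ^ (-σ) := by
          rw [← Real.rpow_natCast_mul hg0.le]
          congr 1
          have hm1 : ((m-1:ℕ):ℝ) = (m:ℝ) - 1 := by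
            have h7 : (1:ℕ) ≤ m := hm
            push_cast [h7]
            ring
          rw [hm1]; ring
        rw [heq]
        exact Real.rpow_le_rpow_of_nonpos (by positivity) hgen (neg_nonpos.mpr hσpos.le)
      calc ∑ n ∈ t, (n:ℝ)^(-σ)
          ≤ t.card • ((g:ℝ)^((1-(m:ℝ))*σ)) := Finset.sum_le_card_nsmul t _ _ hterm
        _ = (t.card:ℝ) * ((g:ℝ)^((1-(m:ℝ))*σ)) := nsmul_eq_mul _ _
        _ ≤ (P m : ℝ) * ((g:ℝ)^((1-(m:ℝ))*σ)) := by
            apply mul_le_mul_of_nonneg_right _ (Real.rpow_nonneg hg0.le _)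
            exact_mod_cast hcardt
        _ = b m := rfl
  set L := s.sup (fun n => (Nat.digits g n).length) with hL
  have hmaps : ∀ n ∈ s, (Nat.digits g n).length ∈ Finset.range (L+1) := fun n hn =>
    Finset.mem_range.mpr (Nat.lt_succ_of_le
      (Finset.le_sup (f := fun n => (Nat.digits g n).length) hn))
  rw [← Finset.sum_fiberwise_of_maps_to hmaps (fun n : ℕ => (n:ℝ)^(-σ))]
  calc ∑ m ∈ Finset.range (L+1),
        ∑ n ∈ s.filter (fun n => (Nat.digits g n).length = m), (n:ℝ)^(-σ)
      ≤ ∑ m ∈ Finset.range (L+1), b m := Finset.sum_le_sum fun m _ => hfiber m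
    _ ≤ ∑' m, b m := Summable.sum_le_tsum _ (fun m _ => hb_nonneg m) hsb
end

section
/- Under the hypotheses of the variable-digit-restriction setup with density parameters α_k, and assuming the set 𝓜 = {m ≥ 1 : U_{m-1} ≠ [1,g-1]} is infinite, the series ∑_{a ∈ A_{g,𝒰}} a^{-σ} diverges for every real σ < (1/log g) ∑_{k=0}^{g-1} α_k log(g-k). -/
open Finset Filter Real

private def vmdAllowed (g : ℕ) (U : ℕ → Finset ℕ) (m i : ℕ) : Finset ℕ :=
  if i = m - 1 then (Finset.range g \ U i).erase 0 else Finset.range g \ U i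

private def vmdNums (g : ℕ) (U : ℕ → Finset ℕ) (m : ℕ) : Finset ℕ :=
  (Fintype.piFinset (fun i : Fin m => vmdAllowed g U m i)).image
    fun f => Nat.ofDigits g (List.ofFn f)

private lemma vmdAllowed_subset (g : ℕ) (U : ℕ → Finset ℕ) (m i : ℕ) :
    vmdAllowed g U m i ⊆ Finset.range g \ U i := by
  unfold vmdAllowed
  split
  · exact Finset.erase_subset _ _
  · exact Finset.Subset.refl _

private lemma vmd_digits_eq (g : ℕ) (hg : 2 ≤ g) (U : ℕ → Finset ℕ) (m : ℕ) (hm : 0 < m)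
    (f : Fin m → ℕ) (hf : f ∈ Fintype.piFinset (fun i : Fin m => vmdAllowed g U m i)) :
    Nat.digits g (Nat.ofDigits g (List.ofFn f)) = List.ofFn f := by
  rw [Fintype.mem_piFinset] at hf
  apply Nat.digits_ofDigits g hg
  · intro l hl
    obtain ⟨i, rfl⟩ := List.mem_ofFn.mp hl
    have := vmdAllowed_subset g U m i (hf i)
    exact Finset.mem_range.mp (Finset.mem_sdiff.mp this).1
  · intro h
    rw [List.getLast_ofFn]
    have hmem := hf ⟨m - 1, Nat.sub_lt hm one_pos⟩
    unfold vmdAllowed at hmem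
    simp only [if_pos rfl] at hmem
    exact Finset.ne_of_mem_erase hmem

private lemma vmd_mem_props (g : ℕ) (hg : 2 ≤ g) (U : ℕ → Finset ℕ) (m : ℕ) (hm : 0 < m)
    (n : ℕ) (hn : n ∈ vmdNums g U m) :
    0 < n ∧ (Nat.digits g n).length = m ∧
      (∀ i < (Nat.digits g n).length, (Nat.digits g n).getD i 0 ∉ U i) ∧ n < g ^ m := by
  obtain ⟨f, hf, rfl⟩ := Finset.mem_image.mp hn
  have hd := vmd_digits_eq g hg U m hm f hf
  rw [Fintype.mem_piFinset] at hf
  have hlen : (Nat.digits g (Nat.ofDigits g (List.ofFn f))).length = m := by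
    rw [hd, List.length_ofFn]
  have hpos : 0 < Nat.ofDigits g (List.ofFn f) := by
    rcases Nat.eq_zero_or_pos (Nat.ofDigits g (List.ofFn f)) with h | h
    · exfalso
      rw [h, Nat.digits_zero] at hd
      have : (List.ofFn f).length = 0 := by rw [← hd]; rfl
      rw [List.length_ofFn] at this
      omega
    · exact h
  refine ⟨hpos, hlen, ?_, ?_⟩
  · intro i hi
    rw [hlen] at hi
    rw [hd, List.getD_eq_getElem _ _ (by rwa [List.length_ofFn]), List.getElem_ofFn]
    have := vmdAllowed_subset g U m i (hf ⟨i, hi⟩)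
    exact (Finset.mem_sdiff.mp this).2
  · have := Nat.lt_base_pow_length_digits (b := g) (m := Nat.ofDigits g (List.ofFn f)) hg
    rwa [hlen] at this

private lemma vmd_card_le (g : ℕ) (hg : 2 ≤ g) (U : ℕ → Finset ℕ) (m : ℕ) (hm : 0 < m)
    (hU : ∀ i, U i ⊂ Finset.range g)
    (htop : (vmdAllowed g U m (m - 1)).Nonempty) :
    ∏ i ∈ Finset.range (m - 1), (g - (U i).card) ≤ (vmdNums g U m).card := by
  have hinj : Set.InjOn (fun f : Fin m → ℕ => Nat.ofDigits g (List.ofFn f))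
      ↑(Fintype.piFinset (fun i : Fin m => vmdAllowed g U m i)) := by
    intro f1 h1 f2 h2 heq
    have e1 := vmd_digits_eq g hg U m hm f1 h1
    have e2 := vmd_digits_eq g hg U m hm f2 h2
    simp only at heq
    rw [heq] at e1
    rw [e2] at e1
    exact List.ofFn_inj.mp e1.symm
  rw [vmdNums, Finset.card_image_of_injOn hinj, Fintype.card_piFinset]
  rw [Fin.prod_univ_eq_prod_range (fun i => (vmdAllowed g U m i).card) m]
  obtain ⟨m', rfl⟩ : ∃ m', m = m' + 1 := ⟨m - 1, (Nat.succ_pred_eq_of_pos hm).symm⟩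
  rw [Finset.prod_range_succ]
  simp only [Nat.add_sub_cancel]
  have h1 : ∏ i ∈ Finset.range m', (g - (U i).card) ≤
      ∏ i ∈ Finset.range m', (vmdAllowed g U (m' + 1) i).card := by
    apply Finset.prod_le_prod
    · intro i _; exact Nat.zero_le _
    · intro i hi
      rw [Finset.mem_range] at hi
      unfold vmdAllowed
      rw [if_neg (by omega), Finset.card_sdiff_of_subset (hU i).subset, Finset.card_range]
  calc ∏ i ∈ Finset.range m', (g - (U i).card)
      ≤ ∏ i ∈ Finset.range m', (vmdAllowed g U (m' + 1) i).card := h1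
    _ ≤ (∏ i ∈ Finset.range m', (vmdAllowed g U (m' + 1) i).card) *
        (vmdAllowed g U (m' + 1) m').card := by
        have := Finset.card_pos.mpr htop
        simp only [Nat.add_sub_cancel] at this
        exact Nat.le_mul_of_pos_right _ this

private lemma vmd_nonempty (g : ℕ) (U : ℕ → Finset ℕ)
    (hU : ∀ i, U i ⊂ Finset.range g) (m : ℕ)
    (hne : U (m - 1) ≠ Finset.Icc 1 (g - 1)) (i : ℕ) :
    (vmdAllowed g U m i).Nonempty := by
  unfold vmdAllowed
  split
  case isTrue h =>
    subst h
    by_contra h0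
    rw [Finset.not_nonempty_iff_eq_empty] at h0
    have hsub : ∀ d, d ∈ Finset.range g \ U (m - 1) → d = 0 := by
      intro d hd
      by_contra hd0
      have : d ∈ (Finset.range g \ U (m - 1)).erase 0 := Finset.mem_erase.mpr ⟨hd0, hd⟩
      rw [h0] at this
      exact absurd this (Finset.notMem_empty d)
    have h0U : 0 ∉ U (m - 1) := by
      intro h0U
      obtain ⟨x, hx, hxU⟩ := Finset.exists_of_ssubset (hU (m - 1))
      have := hsub x (Finset.mem_sdiff.mpr ⟨hx, hxU⟩)
      subst this
      exact hxU h0U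
    apply hne
    ext d
    simp only [Finset.mem_Icc]
    constructor
    · intro hd
      have hdg : d < g := Finset.mem_range.mp ((hU (m - 1)).subset hd)
      have : d ≠ 0 := fun h => h0U (h ▸ hd)
      omega
    · rintro ⟨h1, h2⟩
      by_contra hdU
      have hg1 : 1 ≤ g := by
        obtain ⟨x, hx, _⟩ := Finset.exists_of_ssubset (hU (m - 1))
        have := Finset.mem_range.mp hx
        omega
      have hdr : d ∈ Finset.range g := Finset.mem_range.mpr (by omega)
      have := hsub d (Finset.mem_sdiff.mpr ⟨hdr, hdU⟩)
      omega
  case isFalse h =>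
    obtain ⟨x, hx, hxU⟩ := Finset.exists_of_ssubset (hU i)
    exact ⟨x, Finset.mem_sdiff.mpr ⟨hx, hxU⟩⟩

private lemma vmdNums_nonempty (g : ℕ) (U : ℕ → Finset ℕ)
    (hU : ∀ i, U i ⊂ Finset.range g) (m : ℕ)
    (hne : U (m - 1) ≠ Finset.Icc 1 (g - 1)) :
    (vmdNums g U m).Nonempty := by
  have hf : (fun i : Fin m => (vmd_nonempty g U hU m hne i).choose) ∈
      Fintype.piFinset (fun i : Fin m => vmdAllowed g U m i) :=
    Fintype.mem_piFinset.mpr fun i => (vmd_nonempty g U hU m hne i).choose_spec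
  exact ⟨_, Finset.mem_image_of_mem _ hf⟩

private lemma vmd_ratio (U : ℕ → Finset ℕ) (a : ℝ) (k : ℕ)
    (h : Filter.Tendsto (fun m : ℕ =>
        ((((Finset.range m).filter (fun i => (U i).card = k)).card : ℝ) - a * m) / m)
      Filter.atTop (nhds 0)) :
    Filter.Tendsto (fun m : ℕ =>
        ((((Finset.range m).filter (fun i => (U i).card = k)).card : ℝ)) / m)
      Filter.atTop (nhds a) := by
  have h2 := h.add (tendsto_const_nhds (x := a) (f := Filter.atTop))
  rw [zero_add] at h2
  apply h2.congr'
  filter_upwards [Filter.eventually_ge_atTop 1] with m hm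
  have hm0 : (m : ℝ) ≠ 0 := by
    have : (1 : ℝ) ≤ m := by exact_mod_cast hm
    linarith
  field_simp
  ring

private lemma vmd_logP (g : ℕ) (U : ℕ → Finset ℕ) (hU : ∀ i, U i ⊂ Finset.range g) (m : ℕ) :
    ∑ i ∈ Finset.range m, Real.log ((g : ℝ) - (U i).card) =
      ∑ k ∈ Finset.range g,
        ((((Finset.range m).filter (fun i => (U i).card = k)).card : ℝ)) * Real.log ((g : ℝ) - k) := by
  rw [← Finset.sum_fiberwise_of_maps_to (g := fun i => (U i).card) (t := Finset.range g)
      (fun i _ => Finset.mem_range.mpr (by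
        have := Finset.card_lt_card (hU i)
        rwa [Finset.card_range] at this))
      (fun i => Real.log ((g : ℝ) - (U i).card))]
  apply Finset.sum_congr rfl
  intro k _
  rw [Finset.sum_congr rfl (fun i hi => by rw [(Finset.mem_filter.mp hi).2]),
    Finset.sum_const, nsmul_eq_mul]

private lemma vmd_tendsto (g : ℕ) (U : ℕ → Finset ℕ) (hU : ∀ i, U i ⊂ Finset.range g)
    (α : ℕ → ℝ)
    (hε : ∀ k < g, Filter.Tendsto (fun m : ℕ =>
        ((((Finset.range m).filter (fun i => (U i).card = k)).card : ℝ) - α k * m) / m)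
      Filter.atTop (nhds 0)) :
    Filter.Tendsto (fun m : ℕ => (∑ i ∈ Finset.range m, Real.log ((g : ℝ) - (U i).card)) / m)
      Filter.atTop (nhds (∑ k ∈ Finset.range g, α k * Real.log ((g : ℝ) - k))) := by
  have heq : ∀ m : ℕ, (∑ i ∈ Finset.range m, Real.log ((g : ℝ) - (U i).card)) / m =
      ∑ k ∈ Finset.range g,
        ((((Finset.range m).filter (fun i => (U i).card = k)).card : ℝ)) / m
          * Real.log ((g : ℝ) - k) := by
    intro m
    rw [vmd_logP g U hU m, Finset.sum_div]
    apply Finset.sum_congr rfl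
    intro k _
    ring
  simp only [heq]
  apply tendsto_finset_sum
  intro k hk
  exact (vmd_ratio U (α k) k (hε k (Finset.mem_range.mp hk))).mul_const _

private lemma vmd_explode (g : ℕ) (U : ℕ → Finset ℕ) (hU : ∀ i, U i ⊂ Finset.range g)
    (α : ℕ → ℝ)
    (hε : ∀ k < g, Filter.Tendsto (fun m : ℕ =>
        ((((Finset.range m).filter (fun i => (U i).card = k)).card : ℝ) - α k * m) / m)
      Filter.atTop (nhds 0))
    (σ : ℝ)
    (hσ : σ * Real.log g < ∑ k ∈ Finset.range g, α k * Real.log ((g : ℝ) - k)) :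
    Filter.Tendsto (fun m : ℕ =>
      (∑ i ∈ Finset.range (m - 1), Real.log ((g : ℝ) - (U i).card)) - σ * m * Real.log g)
      Filter.atTop Filter.atTop := by
  set S := ∑ k ∈ Finset.range g, α k * Real.log ((g : ℝ) - k) with hS
  have h1 := vmd_tendsto g U hU α hε
  have h2 : Filter.Tendsto
      (fun m : ℕ => (∑ i ∈ Finset.range (m - 1), Real.log ((g : ℝ) - (U i).card)) / ((m - 1 : ℕ) : ℝ))
      Filter.atTop (nhds S) := h1.comp (Filter.tendsto_sub_atTop_nat 1)
  have h3 : Filter.Tendsto (fun m : ℕ => ((m - 1 : ℕ) : ℝ) / m) Filter.atTop (nhds 1) := by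
    have hb : Filter.Tendsto (fun m : ℕ => 1 - 1 / (m : ℝ)) Filter.atTop (nhds 1) := by
      have := (tendsto_const_nhds (x := (1:ℝ)) (f := Filter.atTop (α := ℕ))).sub
        tendsto_one_div_atTop_nhds_zero_nat
      rwa [sub_zero] at this
    apply hb.congr'
    filter_upwards [Filter.eventually_ge_atTop 1] with m hm
    rw [Nat.cast_sub hm]
    have hm0 : (m : ℝ) ≠ 0 := by
      have : (1 : ℝ) ≤ m := by exact_mod_cast hm
      linarith
    field_simp
    simp
  have h4 : Filter.Tendsto
      (fun m : ℕ => (∑ i ∈ Finset.range (m - 1), Real.log ((g : ℝ) - (U i).card)) / m)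
      Filter.atTop (nhds S) := by
    have := h2.mul h3
    rw [mul_one] at this
    apply this.congr'
    filter_upwards [Filter.eventually_ge_atTop 2] with m hm
    have hm0 : (m : ℝ) ≠ 0 := by
      have : (2 : ℝ) ≤ m := by exact_mod_cast hm
      linarith
    have hm2 : (2 : ℝ) ≤ m := by exact_mod_cast hm
    rw [Nat.cast_sub (by omega : 1 ≤ m)]
    have hm1 : (m : ℝ) - 1 ≠ 0 := by linarith
    field_simp
    rw [Nat.cast_one, mul_div_assoc, div_self hm1, mul_one]
  have h5 : Filter.Tendsto
      (fun m : ℕ => (∑ i ∈ Finset.range (m - 1), Real.log ((g : ℝ) - (U i).card)) / m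
        - σ * Real.log g)
      Filter.atTop (nhds (S - σ * Real.log g)) := h4.sub tendsto_const_nhds
  have h6 : Filter.Tendsto
      (fun m : ℕ => (m : ℝ) *
        ((∑ i ∈ Finset.range (m - 1), Real.log ((g : ℝ) - (U i).card)) / m - σ * Real.log g))
      Filter.atTop Filter.atTop :=
    Filter.Tendsto.atTop_mul_pos (by linarith) tendsto_natCast_atTop_atTop h5
  apply h6.congr'
  filter_upwards [Filter.eventually_ge_atTop 1] with m hm
  have hm0 : (m : ℝ) ≠ 0 := by
    have : (1 : ℝ) ≤ m := by exact_mod_cast hm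
    linarith
  field_simp

/-- Divergence half of the variable-digit-restriction theorem: with 𝓜 infinite and
digit-size densities α_k (error terms ε_k(m)/m → 0), the series ∑ a^{-σ} over
A_{g,𝒰} diverges for every σ < (1/log g) ∑_k α_k log(g-k). -/
theorem variable_missing_digits_diverges (g : ℕ) (hg : 2 ≤ g)
    (U : ℕ → Finset ℕ) (hU : ∀ i, U i ⊂ Finset.range g)
    (hM : {m : ℕ | 0 < m ∧ U (m - 1) ≠ Finset.Icc 1 (g - 1)}.Infinite)
    (α : ℕ → ℝ) (hα : ∀ k < g, 0 ≤ α k)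
    (hε : ∀ k < g, Filter.Tendsto
      (fun m : ℕ =>
        (((Finset.range m).filter (fun i => (U i).card = k)).card - α k * m) / m)
      Filter.atTop (nhds 0))
    (σ : ℝ)
    (hσ : σ < (∑ k ∈ Finset.range g, α k * Real.log (g - k)) / Real.log g) :
    ¬ Summable (fun a : {n : ℕ // 0 < n ∧
        ∀ i < (Nat.digits g n).length, (Nat.digits g n).getD i 0 ∉ U i} =>
      ((a : ℕ) : ℝ) ^ (-σ)) := by
  intro hsum
  set F : ℕ → ℝ := fun n => (n : ℝ) ^ (-σ) with hF
  set A : Set ℕ := {n : ℕ | 0 < n ∧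
      ∀ i < (Nat.digits g n).length, (Nat.digits g n).getD i 0 ∉ U i} with hA
  have hsum' : Summable (A.indicator F) := summable_subtype_iff_indicator.mp hsum
  have hnn : ∀ n, 0 ≤ A.indicator F n := fun n =>
    Set.indicator_nonneg (fun x _ => Real.rpow_nonneg (Nat.cast_nonneg x) _) n
  have hg1 : (1 : ℝ) < g := by exact_mod_cast hg.trans_lt' one_lt_two
  have hlogg : (0 : ℝ) < Real.log g := Real.log_pos hg1
  have hσ' : σ * Real.log g < ∑ k ∈ Finset.range g, α k * Real.log ((g : ℝ) - k) :=
    (lt_div_iff₀ hlogg).mp hσ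
  rcases le_or_gt σ 0 with hσ0 | hσ0
  · -- terms don't tend to zero
    have ht := hsum'.tendsto_cofinite_zero
    rw [Nat.cofinite_eq_atTop] at ht
    have hev := ht.eventually (gt_mem_nhds one_pos)
    obtain ⟨N, hN⟩ := Filter.eventually_atTop.mp hev
    obtain ⟨m, hmM, hmN⟩ := hM.exists_gt (Nat.digits g N).length
    obtain ⟨hmpos, hmne⟩ := hmM
    obtain ⟨n, hn⟩ := vmdNums_nonempty g U hU m hmne
    obtain ⟨hnpos, hnlen, hndig, hnlt⟩ := vmd_mem_props g hg U m hmpos n hn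
    have hnN : N ≤ n := by
      by_contra h
      push_neg at h
      have := Nat.le_digits_len_le g n N h.le
      omega
    have hnA : n ∈ A := ⟨hnpos, hndig⟩
    have h1 := hN n hnN
    rw [Set.indicator_of_mem hnA] at h1
    have h2 : 1 ≤ F n :=
      Real.one_le_rpow (by exact_mod_cast hnpos) (by linarith)
    exact absurd h1 (not_lt.mpr h2)
  · set T := ∑' n, A.indicator F n with hT
    have hE := Real.tendsto_exp_atTop.comp (vmd_explode g U hU α hε σ hσ')
    obtain ⟨N, hN⟩ := Filter.eventually_atTop.mp (hE.eventually_gt_atTop T)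
    obtain ⟨m, hmM, hmN⟩ := hM.exists_gt N
    obtain ⟨hmpos, hmne⟩ := hmM
    have htop := vmd_nonempty g U hU m hmne (m - 1)
    have hcard := vmd_card_le g hg U m hmpos hU htop
    set s := vmdNums g U m with hs
    set P : ℕ := ∏ i ∈ Finset.range (m - 1), (g - (U i).card) with hP
    set x : ℝ := ((g : ℝ) ^ m) ^ (-σ) with hx
    have hxnn : 0 ≤ x := Real.rpow_nonneg (by positivity) _
    have hcardU : ∀ i, (U i).card < g := by
      intro i
      have := Finset.card_lt_card (hU i)
      rwa [Finset.card_range] at this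
    -- each element of s lies in A and is < g^m
    have h_each : ∀ n ∈ s, x ≤ F n := by
      intro n hn
      obtain ⟨hnpos, hnlen, _, hnlt⟩ := vmd_mem_props g hg U m hmpos n hn
      apply Real.rpow_le_rpow_of_nonpos
      · exact_mod_cast hnpos
      · have : (n : ℝ) ≤ ((g ^ m : ℕ) : ℝ) := by exact_mod_cast hnlt.le
        rwa [Nat.cast_pow] at this
      · linarith
    have hsum1 : (s.card : ℝ) * x ≤ ∑ n ∈ s, F n := by
      have := Finset.card_nsmul_le_sum s F x h_each
      rwa [nsmul_eq_mul] at this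
    have hsum2 : (P : ℝ) * x ≤ (s.card : ℝ) * x :=
      mul_le_mul_of_nonneg_right (by exact_mod_cast hcard) hxnn
    have hsum3 : ∑ n ∈ s, F n = ∑ n ∈ s, A.indicator F n := by
      apply Finset.sum_congr rfl
      intro n hn
      obtain ⟨hnpos, _, hndig, _⟩ := vmd_mem_props g hg U m hmpos n hn
      have hnA : n ∈ A := ⟨hnpos, hndig⟩
      rw [Set.indicator_of_mem hnA]
    have hsum4 : ∑ n ∈ s, A.indicator F n ≤ T :=
      hsum'.sum_le_tsum s (fun n _ => hnn n)
    -- identify the exponential with P * x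
    have hEeq : Real.exp ((∑ i ∈ Finset.range (m - 1), Real.log ((g : ℝ) - (U i).card))
        - σ * m * Real.log g) = (P : ℝ) * x := by
      rw [sub_eq_add_neg, Real.exp_add]
      congr 1
      · have hPcast : (P : ℝ) = ∏ i ∈ Finset.range (m - 1), ((g : ℝ) - (U i).card) := by
          rw [hP, Nat.cast_prod]
          exact Finset.prod_congr rfl fun i _ => Nat.cast_sub (hcardU i).le
        rw [Real.exp_sum, hPcast]
        apply Finset.prod_congr rfl
        intro i _
        rw [Real.exp_log]
        have h1 : ((U i).card : ℝ) < g := by exact_mod_cast hcardU i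
        linarith
      · rw [hx, Real.rpow_def_of_pos (by positivity), Real.log_pow]
        ring_nf
    have hlast := hN m hmN.le
    simp only [Function.comp] at hlast
    rw [hEeq] at hlast
    linarith
end

section
/- Under the variable-digit-restriction setup with α_k densities and uniformly bounded error terms |ε_k(m)| < β, and with 𝓜 infinite, the series ∑_{a ∈ A_{g,𝒰}} a^{-σ_c} diverges at the critical exponent σ_c = (1/log g) ∑_{k=0}^{g-1} α_k log(g-k). -/
open Finset

private lemma vmd_exists_block (g : ℕ) (hg : 2 ≤ g) (U : ℕ → Finset ℕ)
    (hU : ∀ i, U i ⊂ Finset.range g) (σ : ℝ) (hσ0 : 0 ≤ σ) (m : ℕ) (hm : 0 < m)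
    (hne : U (m - 1) ≠ Finset.Icc 1 (g - 1)) :
    ∃ B : Finset {n : ℕ // 0 < n ∧ ∀ i < (Nat.digits g n).length,
        (Nat.digits g n).getD i 0 ∉ U i},
      (∀ a ∈ B, (Nat.digits g (a : ℕ)).length = m) ∧
      ((∏ i ∈ Finset.range (m - 1), ((g - (U i).card : ℕ) : ℝ)) * ((g : ℝ) ^ m) ^ (-σ)
        ≤ ∑ a ∈ B, ((a : ℕ) : ℝ) ^ (-σ)) := by
  classical
  have hg1 : 1 < g := hg
  have hcardU : ∀ i, (U i).card < g := by
    intro i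
    have := Finset.card_lt_card (hU i)
    simpa using this
  -- a nonzero allowed top digit
  obtain ⟨d, hdg, hdU, hd0⟩ : ∃ d, d < g ∧ d ∉ U (m - 1) ∧ d ≠ 0 := by
    by_contra h
    push_neg at h
    apply hne
    refine (Finset.eq_of_subset_of_card_le ?_ ?_).symm
    · intro x hx
      simp only [Finset.mem_Icc] at hx
      by_contra hxU
      have hxg : x < g := lt_of_le_of_lt hx.2 (by omega)
      exact absurd (h x hxg hxU) (by omega)
    · have : (Finset.Icc 1 (g - 1)).card = g - 1 := by
        rw [Nat.card_Icc]; omega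
      rw [this]
      have := hcardU (m - 1)
      omega
  set A := {n : ℕ // 0 < n ∧ ∀ i < (Nat.digits g n).length,
      (Nat.digits g n).getD i 0 ∉ U i} with hA
  set D : Fin (m - 1) → Finset ℕ := fun i => Finset.range g \ U i with hD
  set φ : (Fin (m - 1) → ℕ) → ℕ := fun c => Nat.ofDigits g (List.ofFn c ++ [d]) with hφ
  have hlen : ∀ c : Fin (m - 1) → ℕ, (List.ofFn c ++ [d]).length = m := by
    intro c; simp [List.length_ofFn]; omega
  have hdig : ∀ c ∈ Fintype.piFinset D, Nat.digits g (φ c) = List.ofFn c ++ [d] := by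
    intro c hc
    apply Nat.digits_ofDigits g hg1
    · intro l hl
      rcases List.mem_append.1 hl with h' | h'
      · obtain ⟨i, rfl⟩ := (List.mem_ofFn).1 h'
        have := Fintype.mem_piFinset.1 hc i
        have := (Finset.mem_sdiff.1 this).1
        simpa using this
      · simp only [List.mem_singleton] at h'; subst h'; exact hdg
    · intro h'
      rw [List.getLast_append]
      simpa using hd0
  have hmem : ∀ c ∈ Fintype.piFinset D, 0 < φ c ∧
      ∀ i < (Nat.digits g (φ c)).length, (Nat.digits g (φ c)).getD i 0 ∉ U i := by
    intro c hc
    have hd' := hdig c hc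
    constructor
    · rw [Nat.pos_iff_ne_zero, ← Nat.digits_ne_nil_iff_ne_zero (b := g), hd']
      simp
    · intro i hi
      rw [hd'] at hi ⊢
      rw [hlen c] at hi
      rw [List.getD_eq_getElem _ _ (by rw [hlen c]; exact hi)]
      rcases lt_or_ge i (m - 1) with h' | h'
      · rw [List.getElem_append_left (by simpa [List.length_ofFn] using h')]
        rw [List.getElem_ofFn]
        have := Fintype.mem_piFinset.1 hc ⟨i, by simpa [List.length_ofFn] using h'⟩
        exact (Finset.mem_sdiff.1 this).2
      · have hieq : i = m - 1 := by omega
        rw [List.getElem_append_right (by simpa [List.length_ofFn] using h')]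
        subst hieq
        simpa [List.length_ofFn] using hdU
  let ψ : {c // c ∈ Fintype.piFinset D} → A := fun c => ⟨φ c.1, hmem c.1 c.2⟩
  have hφlt : ∀ c ∈ Fintype.piFinset D, φ c < g ^ m := by
    intro c hc
    have := Nat.lt_base_pow_length_digits (b := g) (m := φ c) hg1
    rwa [hdig c hc, hlen c] at this
  refine ⟨(Fintype.piFinset D).attach.image ψ, ?_, ?_⟩
  · intro a ha
    obtain ⟨c, _, rfl⟩ := Finset.mem_image.1 ha
    show (Nat.digits g (φ c.1)).length = m
    rw [hdig c.1 c.2, hlen]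
  · have hinj : ∀ x ∈ (Fintype.piFinset D).attach, ∀ y ∈ (Fintype.piFinset D).attach,
        ψ x = ψ y → x = y := by
      intro x _ y _ hxy
      have h1 : φ x.1 = φ y.1 := congrArg Subtype.val hxy
      have h2 : List.ofFn x.1 ++ [d] = List.ofFn y.1 ++ [d] := by
        rw [← hdig x.1 x.2, ← hdig y.1 y.2, h1]
      have h3 := List.append_cancel_right h2
      exact Subtype.ext (List.ofFn_injective h3)
    rw [Finset.sum_image hinj]
    have hterm : ∀ c ∈ (Fintype.piFinset D).attach,
        ((g : ℝ) ^ m) ^ (-σ) ≤ ((ψ c : ℕ) : ℝ) ^ (-σ) := by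
      intro c _
      apply Real.rpow_le_rpow_of_nonpos
      · exact_mod_cast (hmem c.1 c.2).1
      · exact_mod_cast (hφlt c.1 c.2).le
      · linarith
    have := Finset.card_nsmul_le_sum ((Fintype.piFinset D).attach)
      (fun c => ((ψ c : ℕ) : ℝ) ^ (-σ)) (((g : ℝ) ^ m) ^ (-σ)) hterm
    rw [Finset.card_attach, Fintype.card_piFinset] at this
    have hcard : ∀ i : Fin (m - 1), (D i).card = g - (U i).card := by
      intro i
      rw [hD]
      rw [Finset.card_sdiff_of_subset (hU i).subset, Finset.card_range]
    calc (∏ i ∈ Finset.range (m - 1), ((g - (U i).card : ℕ) : ℝ)) * ((g : ℝ) ^ m) ^ (-σ)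
        = ((∏ i : Fin (m - 1), (D i).card : ℕ) : ℝ) * ((g : ℝ) ^ m) ^ (-σ) := by
          push_cast
          rw [← Fin.prod_univ_eq_prod_range (fun i => ((g - (U i).card : ℕ) : ℝ)) (m - 1)]
          congr 1
          exact Finset.prod_congr rfl (fun i _ => by rw [hcard i])
      _ ≤ ∑ c ∈ (Fintype.piFinset D).attach, ((ψ c : ℕ) : ℝ) ^ (-σ) := by
          rw [← nsmul_eq_mul] at *
          simpa using this

/-- With 𝓜 infinite and uniformly bounded error terms |ε_k(m)| < β, the series
∑ a^{-σ_c} over A_{g,𝒰} diverges at the critical exponent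
σ_c = (1/log g) ∑_k α_k log(g-k). -/
theorem variable_missing_digits_diverges_critical (g : ℕ) (hg : 2 ≤ g)
    (U : ℕ → Finset ℕ) (hU : ∀ i, U i ⊂ Finset.range g)
    (hM : {m : ℕ | 0 < m ∧ U (m - 1) ≠ Finset.Icc 1 (g - 1)}.Infinite)
    (α : ℕ → ℝ) (hα : ∀ k < g, 0 ≤ α k) (β : ℝ) (hβ : 0 < β)
    (hε : ∀ k < g, ∀ m : ℕ,
      |(((Finset.range m).filter (fun i => (U i).card = k)).card : ℝ) - α k * m| < β) :
    ¬ Summable (fun a : {n : ℕ // 0 < n ∧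
        ∀ i < (Nat.digits g n).length, (Nat.digits g n).getD i 0 ∉ U i} =>
      ((a : ℕ) : ℝ) ^
        (-((∑ k ∈ Finset.range g, α k * Real.log (g - k)) / Real.log g))) := by
  classical
  intro hsum
  set A := {n : ℕ // 0 < n ∧ ∀ i < (Nat.digits g n).length,
      (Nat.digits g n).getD i 0 ∉ U i} with hA
  set σ : ℝ := (∑ k ∈ Finset.range g, α k * Real.log (g - k)) / Real.log g with hσ
  set f : A → ℝ := fun a => ((a : ℕ) : ℝ) ^ (-σ) with hf
  have hg1 : 1 < g := hg
  have hlogg : (0 : ℝ) < Real.log g := Real.log_pos (by exact_mod_cast hg1)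
  have hcardU : ∀ i, (U i).card < g := by
    intro i
    have := Finset.card_lt_card (hU i)
    simpa using this
  have hgk : ∀ k < g, (1 : ℝ) ≤ (g : ℝ) - k := by
    intro k hk
    have : (k : ℝ) + 1 ≤ g := by exact_mod_cast hk
    linarith
  have hlogk : ∀ k < g, (0 : ℝ) ≤ Real.log ((g : ℝ) - k) := by
    intro k hk
    exact Real.log_nonneg (hgk k hk)
  have hσ0 : 0 ≤ σ := by
    apply div_nonneg _ hlogg.le
    apply Finset.sum_nonneg
    intro k hk
    have hk' := Finset.mem_range.1 hk
    exact mul_nonneg (hα k hk') (hlogk k hk')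
  set C₀ : ℝ := ∑ k ∈ Finset.range g, Real.log ((g : ℝ) - k) with hC₀
  have hσlog : σ * Real.log g = ∑ k ∈ Finset.range g, α k * Real.log ((g : ℝ) - k) := by
    rw [hσ, div_mul_cancel₀ _ hlogg.ne']
  -- lower bound on products
  have hPbound : ∀ m : ℕ, Real.exp ((m : ℝ) * (σ * Real.log g) - β * C₀)
      ≤ ∏ i ∈ Finset.range m, ((g - (U i).card : ℕ) : ℝ) := by
    intro m
    have hpos : ∀ i ∈ Finset.range m, (0 : ℝ) < ((g - (U i).card : ℕ) : ℝ) := by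
      intro i _
      have := hcardU i
      exact_mod_cast Nat.sub_pos_of_lt this
    have hP : (0 : ℝ) < ∏ i ∈ Finset.range m, ((g - (U i).card : ℕ) : ℝ) :=
      Finset.prod_pos hpos
    rw [← Real.exp_log hP, Real.exp_le_exp]
    rw [Real.log_prod (fun i hi => (hpos i hi).ne')]
    have hmaps : ∀ i ∈ Finset.range m, (U i).card ∈ Finset.range g :=
      fun i _ => Finset.mem_range.2 (hcardU i)
    rw [← Finset.sum_fiberwise_of_maps_to hmaps
      (fun i => Real.log (((g - (U i).card : ℕ) : ℝ)))]
    have hinner : ∀ k ∈ Finset.range g,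
        ∑ i ∈ Finset.filter (fun i => (U i).card = k) (Finset.range m),
          Real.log (((g - (U i).card : ℕ) : ℝ))
        = ((Finset.filter (fun i => (U i).card = k) (Finset.range m)).card : ℝ)
            * Real.log ((g : ℝ) - k) := by
      intro k hk
      have hk' := Finset.mem_range.1 hk
      rw [Finset.sum_congr rfl (fun i hi => ?_), Finset.sum_const, nsmul_eq_mul]
      have hik : (U i).card = k := (Finset.mem_filter.1 hi).2
      rw [hik, Nat.cast_sub hk'.le]
    rw [Finset.sum_congr rfl hinner, hσlog, Finset.mul_sum, hC₀, Finset.mul_sum,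
      ← Finset.sum_sub_distrib]
    apply Finset.sum_le_sum
    intro k hk
    have hk' := Finset.mem_range.1 hk
    have h1 := hε k hk' m
    have h2 : α k * m - β
        ≤ ((Finset.filter (fun i => (U i).card = k) (Finset.range m)).card : ℝ) := by
      have := abs_lt.1 h1
      linarith [this.1]
    have hL := hlogk k hk'
    nlinarith [mul_le_mul_of_nonneg_right h2 hL]
  have hc' : (0 : ℝ) < Real.exp (-(β * C₀)) / g := by positivity
  -- per-block lower bound
  have key : ∀ m : ℕ, 0 < m → U (m - 1) ≠ Finset.Icc 1 (g - 1) →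
      ∃ B : Finset A, (∀ a ∈ B, (Nat.digits g (a : ℕ)).length = m) ∧
        Real.exp (-(β * C₀)) / g ≤ ∑ a ∈ B, f a := by
    intro m hm hne
    obtain ⟨B, h1, h2⟩ := vmd_exists_block g hg U hU σ hσ0 m hm hne
    refine ⟨B, h1, le_trans ?_ h2⟩
    have hrg : ((g : ℝ) ^ m) ^ (-σ) = Real.exp (-(σ * ((m : ℝ) * Real.log g))) := by
      rw [Real.rpow_def_of_pos (by positivity), Real.log_pow]
      ring_nf
    have hPm : (∏ i ∈ Finset.range m, ((g - (U i).card : ℕ) : ℝ))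
        = (∏ i ∈ Finset.range (m - 1), ((g - (U i).card : ℕ) : ℝ))
          * ((g - (U (m - 1)).card : ℕ) : ℝ) := by
      conv_lhs => rw [show m = (m - 1) + 1 by omega]
      rw [Finset.prod_range_succ]
    have hprodnn : (0 : ℝ) ≤ ∏ i ∈ Finset.range (m - 1), ((g - (U i).card : ℕ) : ℝ) :=
      Finset.prod_nonneg (fun i _ => by positivity)
    have hle : (∏ i ∈ Finset.range m, ((g - (U i).card : ℕ) : ℝ))
        ≤ (∏ i ∈ Finset.range (m - 1), ((g - (U i).card : ℕ) : ℝ)) * g := by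
      rw [hPm]
      apply mul_le_mul_of_nonneg_left _ hprodnn
      exact_mod_cast Nat.sub_le g _
    have hP' : Real.exp ((m : ℝ) * (σ * Real.log g) - β * C₀) / g
        ≤ ∏ i ∈ Finset.range (m - 1), ((g - (U i).card : ℕ) : ℝ) := by
      rw [div_le_iff₀ (by positivity : (0:ℝ) < g)]
      exact le_trans (hPbound m) hle
    have h3 := mul_le_mul_of_nonneg_right hP'
      (Real.exp_nonneg (-(σ * ((m : ℝ) * Real.log g))))
    rw [hrg]
    calc Real.exp (-(β * C₀)) / g
        = Real.exp ((m : ℝ) * (σ * Real.log g) - β * C₀) / g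
          * Real.exp (-(σ * ((m : ℝ) * Real.log g))) := by
          rw [div_mul_eq_mul_div, ← Real.exp_add]
          congr 2
          ring
      _ ≤ _ := h3
  -- infinitely many blocks contradict summability
  have hf0 : ∀ a : A, 0 ≤ f a := fun a => Real.rpow_nonneg (Nat.cast_nonneg _) _
  set t : ℝ := ∑' a, f a with ht
  obtain ⟨n, hn⟩ := exists_nat_gt (t / (Real.exp (-(β * C₀)) / g))
  obtain ⟨S, hS𝓜, hSfin, hScard⟩ := hM.exists_subset_ncard_eq n
  set M : Finset ℕ := hSfin.toFinset with hMdef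
  have hMcard : M.card = n := by
    rw [hMdef, ← Set.ncard_eq_toFinset_card S hSfin, hScard]
  have hMmem : ∀ m ∈ M, 0 < m ∧ U (m - 1) ≠ Finset.Icc 1 (g - 1) := by
    intro m hm
    exact hS𝓜 (hSfin.mem_toFinset.1 hm)
  set B' : ℕ → Finset A := fun m =>
    if h : 0 < m ∧ U (m - 1) ≠ Finset.Icc 1 (g - 1)
    then (key m h.1 h.2).choose else ∅ with hB'
  have hB'eq : ∀ m (h : 0 < m ∧ U (m - 1) ≠ Finset.Icc 1 (g - 1)),
      B' m = (key m h.1 h.2).choose := by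
    intro m h
    simp only [hB']
    rw [dif_pos h]
  have hB'len : ∀ m, ∀ a ∈ B' m, (Nat.digits g (a : ℕ)).length = m := by
    intro m a ha
    by_cases h : 0 < m ∧ U (m - 1) ≠ Finset.Icc 1 (g - 1)
    · rw [hB'eq m h] at ha
      exact (key m h.1 h.2).choose_spec.1 a ha
    · have : B' m = ∅ := by simp only [hB']; rw [dif_neg h]
      rw [this] at ha
      simp at ha
  have hB'sum : ∀ m ∈ M, Real.exp (-(β * C₀)) / g ≤ ∑ a ∈ B' m, f a := by
    intro m hm
    have h := hMmem m hm
    rw [hB'eq m h]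
    exact (key m h.1 h.2).choose_spec.2
  have hdisj : ∀ m ∈ M, ∀ m' ∈ M, m ≠ m' → Disjoint (B' m) (B' m') := by
    intro m _ m' _ hmm'
    rw [Finset.disjoint_left]
    intro a ha ha'
    exact hmm' ((hB'len m a ha).symm.trans (hB'len m' a ha'))
  have hsumle : ∑ a ∈ M.biUnion B', f a ≤ t :=
    Summable.sum_le_tsum _ (fun a _ => hf0 a) hsum
  rw [Finset.sum_biUnion hdisj] at hsumle
  have hlower : (n : ℝ) * (Real.exp (-(β * C₀)) / g) ≤ ∑ m ∈ M, ∑ a ∈ B' m, f a := by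
    calc (n : ℝ) * (Real.exp (-(β * C₀)) / g)
        = M.card • (Real.exp (-(β * C₀)) / g) := by
          rw [hMcard, nsmul_eq_mul]
      _ ≤ ∑ m ∈ M, ∑ a ∈ B' m, f a :=
          Finset.card_nsmul_le_sum M _ _ hB'sum
  have := (div_lt_iff₀ hc').1 hn
  linarith
end

section
/- Let g ≥ 2 and let (U_i) be proper subsets of [0,g-1]. The set A_{g,𝒰} of positive integers with base-g digits avoiding each U_i at position i is infinite if and only if the set {m ≥ 1 : U_{m-1} ≠ [1,g-1]} is infinite. -/
lemma exists_free_digit {g : ℕ} {U : Finset ℕ} (h : U ⊂ Finset.range g) :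
    ∃ d, d < g ∧ d ∉ U := by
  obtain ⟨x, hx, hxU⟩ := Finset.exists_of_ssubset h
  exact ⟨x, Finset.mem_range.mp hx, hxU⟩

lemma exists_top_digit {g : ℕ} (hg : 2 ≤ g) {U : Finset ℕ}
    (h : U ⊂ Finset.range g) (hne : U ≠ Finset.Icc 1 (g - 1)) :
    ∃ e, 0 < e ∧ e < g ∧ e ∉ U := by
  by_contra hc
  push_neg at hc
  apply hne
  apply Finset.Subset.antisymm
  · intro u hu
    have hug : u < g := Finset.mem_range.mp (h.subset hu)
    have hu0 : u ≠ 0 := by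
      rintro rfl
      obtain ⟨x, hx, hxU⟩ := Finset.exists_of_ssubset h
      have hxg := Finset.mem_range.mp hx
      rcases Nat.eq_zero_or_pos x with rfl | hx0
      · exact hxU hu
      · exact hxU (hc x hx0 hxg)
    exact Finset.mem_Icc.mpr ⟨Nat.one_le_iff_ne_zero.mpr hu0, Nat.le_sub_one_of_lt hug⟩
  · intro u hu
    obtain ⟨h1, h2⟩ := Finset.mem_Icc.mp hu
    exact hc u h1 (lt_of_le_of_lt h2 (Nat.sub_lt (by omega) one_pos))

/-- A_{g,𝒰} is infinite iff the set 𝓜 = {m ≥ 1 : U_{m-1} ≠ [1,g-1]} is infinite. -/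
theorem variable_missing_digits_infinite_iff (g : ℕ) (hg : 2 ≤ g)
    (U : ℕ → Finset ℕ) (hU : ∀ i, U i ⊂ Finset.range g) :
    {n : ℕ | 0 < n ∧
        ∀ i < (Nat.digits g n).length, (Nat.digits g n).getD i 0 ∉ U i}.Infinite ↔
      {m : ℕ | 0 < m ∧ U (m - 1) ≠ Finset.Icc 1 (g - 1)}.Infinite := by
  have hg1 : 1 < g := hg
  constructor
  · -- A infinite → M infinite
    intro hA
    by_contra hM
    rw [Set.not_infinite] at hM
    obtain ⟨N, hN⟩ := hM.bddAbove
    apply (Set.finite_Iio (g ^ N)).subset (fun n hn => ?_) |>.not_infinite hA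
    obtain ⟨hn0, hdig⟩ := hn
    set L := Nat.digits g n with hL
    have hLne : L ≠ [] := Nat.digits_ne_nil_iff_ne_zero.mpr hn0.ne'
    have hm0 : 0 < L.length := List.length_pos_iff.mpr hLne
    have hlen : L.length ≤ N := by
      by_contra hlen
      push_neg at hlen
      have hmnotM : L.length ∉ {m : ℕ | 0 < m ∧ U (m - 1) ≠ Finset.Icc 1 (g - 1)} := by
        intro hmem
        exact absurd (hN hmem) (not_le.mpr hlen)
      have hUeq : U (L.length - 1) = Finset.Icc 1 (g - 1) := by
        by_contra hne
        exact hmnotM ⟨hm0, hne⟩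
      have htop := hdig (L.length - 1) (Nat.sub_lt hm0 one_pos)
      rw [hUeq] at htop
      apply htop
      have hget : L.getD (L.length - 1) 0 = L.getLast hLne := by
        rw [List.getLast_eq_getElem, List.getD_eq_getElem L 0 (Nat.sub_lt hm0 one_pos)]
      rw [hget]
      have hne0 : L.getLast hLne ≠ 0 := Nat.getLast_digit_ne_zero g hn0.ne'
      have hltg : L.getLast hLne < g :=
        Nat.digits_lt_base hg1 (List.getLast_mem hLne)
      exact Finset.mem_Icc.mpr ⟨Nat.one_le_iff_ne_zero.mpr hne0, Nat.le_sub_one_of_lt hltg⟩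
    have : n < g ^ L.length := Nat.lt_base_pow_length_digits hg1
    exact lt_of_lt_of_le this (Nat.pow_le_pow_right (by omega) hlen)
  · -- M infinite → A infinite
    intro hM
    apply Set.infinite_of_not_bddAbove
    rintro ⟨B, hB⟩
    obtain ⟨m, hmM, hBm⟩ := hM.exists_gt B
    obtain ⟨hm0, hmne⟩ := hmM
    -- choose digits
    choose d hd hd' using fun i => exists_free_digit (hU i)
    obtain ⟨e, he0, heg, heU⟩ := exists_top_digit hg (hU (m - 1)) hmne
    set L : List ℕ := List.ofFn (fun i : Fin m => if (i : ℕ) = m - 1 then e else d i) with hLdef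
    have hLlen : L.length = m := List.length_ofFn
    have hLlt : ∀ l ∈ L, l < g := by
      intro l hl
      rw [List.mem_ofFn] at hl
      obtain ⟨i, rfl⟩ := hl
      split
      · exact heg
      · exact hd i
    have hLne : L ≠ [] := by
      intro h
      rw [h] at hLlen
      simp at hLlen
      omega
    have hLget : ∀ i (h : i < L.length), L[i] = if i = m - 1 then e else d i := by
      intro i h
      simp only [hLdef, List.getElem_ofFn]
    have hLlast : ∀ (h : L ≠ []), L.getLast h ≠ 0 := by
      intro h
      rw [List.getLast_eq_getElem, hLget _ _, hLlen, if_pos rfl]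
      omega
    set n := Nat.ofDigits g L with hn
    have hdig : Nat.digits g n = L := Nat.digits_ofDigits g hg1 L hLlt hLlast
    have hn0 : 0 < n := by
      rcases Nat.eq_zero_or_pos n with h0 | h
      · exfalso; apply hLne; rw [← hdig, h0]; simp
      · exact h
    have hnA : n ∈ {n : ℕ | 0 < n ∧
        ∀ i < (Nat.digits g n).length, (Nat.digits g n).getD i 0 ∉ U i} := by
      refine ⟨hn0, fun i hi => ?_⟩
      rw [hdig] at hi ⊢
      rw [List.getD_eq_getElem L 0 hi, hLget i hi]
      split
      · rename_i h; rw [h]; exact heU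
      · exact hd' i
    have hle : n ≤ B := hB hnA
    -- but n ≥ g^(m-1) ≥ 2^(m-1) > m - 1, so n ≥ m > B
    have h1 : g ^ (Nat.digits g n).length ≤ g * n :=
      Nat.base_pow_length_digits_le g n hg1 hn0.ne'
    rw [hdig, hLlen] at h1
    have h1' : g ^ (m - 1) ≤ n := by
      have hx : g * g ^ (m - 1) ≤ g * n := by
        rwa [← pow_succ', show m - 1 + 1 = m by omega]
      exact Nat.le_of_mul_le_mul_left hx (by omega)
    have h2 : m - 1 < 2 ^ (m - 1) := Nat.lt_two_pow_self (n := m - 1)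
    have h4 : 2 ^ (m - 1) ≤ g ^ (m - 1) := Nat.pow_le_pow_left hg (m - 1)
    omega
end
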